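/- arXiv:2303.17266 — 3 statements merged into one kernel-verified Lean document; each statement's English description precedes it below -/
import Mathlib

section
/- For any two square-integrable real random variables X₁ ~ F₁ and X₂ ~ F₂ with given marginal distributions, E(X₁X₂) ≤ E(F₁⁻¹(U)F₂⁻¹(U)) where U is uniform on [0,1], i.e., the comonotonic coupling maximizes the expected product in dimension 2. -/
open MeasureTheory Set

/-- Generalized inverse (quantile function) of a distribution on ℝ:
`F⁻¹(u) = inf {x : F(x) ≥ u}`. -/
noncomputable def quantile (ν : Measure ℝ) (u : ℝ) : ℝ :=
  sInf {x : ℝ | u ≤ (ν (Iic x)).toReal}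

open Filter ProbabilityTheory

namespace Frechet

/-- elementary step function: `gg a a' s = 1_{s < a} - 1_{s < a'}`. -/
noncomputable def gg (a a' s : ℝ) : ℝ :=
  (Set.Iio a).indicator 1 s - (Set.Iio a').indicator 1 s

lemma gg_eq (a a' s : ℝ) :
    gg a a' s = (Ico a' a).indicator 1 s - (Ico a a').indicator 1 s := by
  by_cases h1 : s < a <;> by_cases h2 : s < a' <;>
    simp [gg, Set.indicator_apply, h1, h2, not_lt.1, le_of_not_gt]

lemma integrable_indicator_Ico (a b : ℝ) :
    Integrable ((Ico a b).indicator (1 : ℝ → ℝ)) volume := by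
  rw [integrable_indicator_iff measurableSet_Ico]
  exact integrableOn_const (by simp [Real.volume_Ico, ENNReal.ofReal_lt_top])

lemma integrable_gg (a a' : ℝ) : Integrable (gg a a') volume := by
  have : gg a a' = fun s => (Ico a' a).indicator 1 s - (Ico a a').indicator 1 s :=
    funext fun s => gg_eq a a' s
  rw [this]
  exact (integrable_indicator_Ico a' a).sub (integrable_indicator_Ico a a')

lemma integral_gg (a a' : ℝ) : ∫ s, gg a a' s = a - a' := by
  simp_rw [gg_eq]
  rw [integral_sub (integrable_indicator_Ico a' a) (integrable_indicator_Ico a a'),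
    integral_indicator_one measurableSet_Ico, integral_indicator_one measurableSet_Ico,
    measureReal_def, measureReal_def, Real.volume_Ico, Real.volume_Ico, ENNReal.toReal_ofReal', ENNReal.toReal_ofReal']
  rcases le_total a' a with h | h
  · rw [max_eq_left (by linarith), max_eq_right (by linarith)]; ring
  · rw [max_eq_right (by linarith), max_eq_left (by linarith)]; ring

lemma integral_abs_gg (a a' : ℝ) : ∫ s, |gg a a' s| = |a - a'| := by
  rcases le_total a' a with h | h
  · have he : ∀ s, |gg a a' s| = (Ico a' a).indicator 1 s := by
      intro s
      rw [gg_eq, Ico_eq_empty (not_lt.2 h), Set.indicator_empty, show (fun _ : ℝ => (0:ℝ)) s = 0 from rfl, sub_zero]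
      exact abs_of_nonneg (Set.indicator_nonneg (fun _ _ => zero_le_one) s)
    simp_rw [he]
    rw [integral_indicator_one measurableSet_Ico, measureReal_def, Real.volume_Ico,
      ENNReal.toReal_ofReal (by linarith), abs_of_nonneg (by linarith)]
  · have he : ∀ s, |gg a a' s| = (Ico a a').indicator 1 s := by
      intro s
      rw [gg_eq, Ico_eq_empty (not_lt.2 h), Set.indicator_empty, show (fun _ : ℝ => (0:ℝ)) s = 0 from rfl, zero_sub, abs_neg]
      exact abs_of_nonneg (Set.indicator_nonneg (fun _ _ => zero_le_one) s)
    simp_rw [he]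
    rw [integral_indicator_one measurableSet_Ico, measureReal_def, Real.volume_Ico,
      ENNReal.toReal_ofReal (by linarith), abs_of_nonpos (by linarith)]
    ring

lemma integral_gg_prod (a a' b b' : ℝ) :
    ∫ z : ℝ × ℝ, gg a a' z.1 * gg b b' z.2 ∂(volume.prod volume) = (a - a') * (b - b') := by
  rw [integral_prod_mul, integral_gg, integral_gg]

lemma integral_norm_gg_prod (a a' b b' : ℝ) :
    ∫ z : ℝ × ℝ, ‖gg a a' z.1 * gg b b' z.2‖ ∂(volume.prod volume) = |a - a'| * |b - b'| := by
  simp_rw [norm_mul, Real.norm_eq_abs]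
  rw [integral_prod_mul (f := fun s => |gg a a' s|) (g := fun t => |gg b b' t|),
    integral_abs_gg, integral_abs_gg]


variable {Ω : Type*} [MeasurableSpace Ω] (μ : Measure Ω) [IsProbabilityMeasure μ]

lemma l2_mul_integrable {f g : Ω → ℝ} (hf : MemLp f 2 μ) (hg : MemLp g 2 μ) :
    Integrable (fun x => f x * g x) μ := by
  have h := hf.smul (E := ℝ) (𝕜 := ℝ) hg (r := 1)
  exact (h.integrable le_rfl).congr (ae_of_all _ fun x => by simp only [Pi.smul_apply, smul_eq_mul, Pi.mul_apply]; ring)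

lemma memLp_fst {X : Ω → ℝ} (hX : MemLp X 2 μ) :
    MemLp (fun p : Ω × Ω => X p.1) 2 (μ.prod μ) :=
  hX.comp_measurePreserving
    ⟨measurable_fst, by simp [Measure.map_fst_prod, measure_univ]⟩

lemma memLp_snd {X : Ω → ℝ} (hX : MemLp X 2 μ) :
    MemLp (fun p : Ω × Ω => X p.2) 2 (μ.prod μ) :=
  hX.comp_measurePreserving
    ⟨measurable_snd, by simp [Measure.map_snd_prod, measure_univ]⟩

/-- Expansion: `∫ (X(ω)-X(ω'))(Y(ω)-Y(ω')) dμ⊗μ = 2 (E[XY] - E[X]E[Y])`. -/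
lemma expand {X Y : Ω → ℝ} (hX : MemLp X 2 μ) (hY : MemLp Y 2 μ) :
    ∫ p : Ω × Ω, (X p.1 - X p.2) * (Y p.1 - Y p.2) ∂(μ.prod μ)
      = 2 * ((∫ ω, X ω * Y ω ∂μ) - (∫ ω, X ω ∂μ) * (∫ ω, Y ω ∂μ)) := by
  have hXY : Integrable (fun ω => X ω * Y ω) μ := l2_mul_integrable μ hX hY
  have hX1 : Integrable X μ := hX.integrable one_le_two
  have hY1 : Integrable Y μ := hY.integrable one_le_two
  have i1 : Integrable (fun p : Ω × Ω => (X p.1 * Y p.1) * (1 : ℝ)) (μ.prod μ) :=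
    hXY.mul_prod (integrable_const 1)
  have i2 : Integrable (fun p : Ω × Ω => X p.1 * Y p.2) (μ.prod μ) := hX1.mul_prod hY1
  have i3 : Integrable (fun p : Ω × Ω => Y p.1 * X p.2) (μ.prod μ) := hY1.mul_prod hX1
  have i4 : Integrable (fun p : Ω × Ω => (1 : ℝ) * (X p.2 * Y p.2)) (μ.prod μ) :=
    (integrable_const 1).mul_prod hXY
  have hfe : (fun p : Ω × Ω => (X p.1 - X p.2) * (Y p.1 - Y p.2))
      = fun p : Ω × Ω => ((X p.1 * Y p.1) * (1 : ℝ) - X p.1 * Y p.2)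
          - (Y p.1 * X p.2 - (1 : ℝ) * (X p.2 * Y p.2)) := by
    funext p; ring
  have hone : (∫ _ : Ω, (1 : ℝ) ∂μ) = 1 := by simp
  have i12 : Integrable (fun p : Ω × Ω => (X p.1 * Y p.1) * (1:ℝ) - X p.1 * Y p.2) (μ.prod μ) :=
    i1.sub i2
  have i34 : Integrable (fun p : Ω × Ω => Y p.1 * X p.2 - (1:ℝ) * (X p.2 * Y p.2)) (μ.prod μ) :=
    i3.sub i4
  rw [hfe, integral_sub i12 i34, integral_sub i1 i2, integral_sub i3 i4,
    integral_prod_mul (f := fun ω => X ω * Y ω) (g := fun _ => (1 : ℝ)),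
    integral_prod_mul (f := X) (g := Y),
    integral_prod_mul (f := Y) (g := X),
    integral_prod_mul (f := fun _ => (1 : ℝ)) (g := fun ω => X ω * Y ω), hone]
  ring

set_option maxHeartbeats 1000000 in
/-- Hoeffding's identity: covariance as integral of the difference between the joint
"survival" function and the product of marginal survival functions; together with
integrability of that difference. -/
theorem hoeffding (X Y : Ω → ℝ) (hmX : Measurable X) (hmY : Measurable Y)
    (hX : MemLp X 2 μ) (hY : MemLp Y 2 μ) :
    Integrable (fun z : ℝ × ℝ => (μ {ω | z.1 < X ω ∧ z.2 < Y ω}).toReal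
        - (μ {ω | z.1 < X ω}).toReal * (μ {ω | z.2 < Y ω}).toReal) (volume.prod volume) ∧
    ∫ ω, X ω * Y ω ∂μ = (∫ ω, X ω ∂μ) * (∫ ω, Y ω ∂μ)
        + ∫ z : ℝ × ℝ, ((μ {ω | z.1 < X ω ∧ z.2 < Y ω}).toReal
          - (μ {ω | z.1 < X ω}).toReal * (μ {ω | z.2 < Y ω}).toReal) ∂(volume.prod volume) := by
  set P : Measure (Ω × Ω) := μ.prod μ with hP
  set K : ℝ × ℝ → ℝ := fun z => (μ {ω | z.1 < X ω ∧ z.2 < Y ω}).toReal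
      - (μ {ω | z.1 < X ω}).toReal * (μ {ω | z.2 < Y ω}).toReal with hK
  set Ψ : (Ω × Ω) × ℝ × ℝ → ℝ :=
    fun q => gg (X q.1.1) (X q.1.2) q.2.1 * gg (Y q.1.1) (Y q.1.2) q.2.2 with hΨ
  -- measurability of Ψ
  have hΨm : Measurable Ψ := by
    have e : Ψ = fun q : (Ω × Ω) × ℝ × ℝ =>
        ({q : (Ω × Ω) × ℝ × ℝ | q.2.1 < X q.1.1}.indicator 1 q
          - {q : (Ω × Ω) × ℝ × ℝ | q.2.1 < X q.1.2}.indicator 1 q)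
        * ({q : (Ω × Ω) × ℝ × ℝ | q.2.2 < Y q.1.1}.indicator 1 q
          - {q : (Ω × Ω) × ℝ × ℝ | q.2.2 < Y q.1.2}.indicator 1 q) := by
      funext q
      simp [hΨ, gg, Set.indicator_apply]
    rw [e]
    have m1 : MeasurableSet {q : (Ω × Ω) × ℝ × ℝ | q.2.1 < X q.1.1} :=
      measurableSet_lt measurable_snd.fst (hmX.comp measurable_fst.fst)
    have m2 : MeasurableSet {q : (Ω × Ω) × ℝ × ℝ | q.2.1 < X q.1.2} :=
      measurableSet_lt measurable_snd.fst (hmX.comp measurable_fst.snd)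
    have m3 : MeasurableSet {q : (Ω × Ω) × ℝ × ℝ | q.2.2 < Y q.1.1} :=
      measurableSet_lt measurable_snd.snd (hmY.comp measurable_fst.fst)
    have m4 : MeasurableSet {q : (Ω × Ω) × ℝ × ℝ | q.2.2 < Y q.1.2} :=
      measurableSet_lt measurable_snd.snd (hmY.comp measurable_fst.snd)
    exact ((measurable_one.indicator m1).sub (measurable_one.indicator m2)).mul
      ((measurable_one.indicator m3).sub (measurable_one.indicator m4))
  -- integrability of Ψ on the product space
  have sect : ∀ p : Ω × Ω, Integrable (fun z : ℝ × ℝ => Ψ (p, z)) (volume.prod volume) := by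
    intro p
    simp only [hΨ]
    exact (integrable_gg _ _).mul_prod (integrable_gg _ _)
  have h2X : MemLp (fun p : Ω × Ω => X p.1 - X p.2) 2 P := (memLp_fst μ hX).sub (memLp_snd μ hX)
  have h2Y : MemLp (fun p : Ω × Ω => Y p.1 - Y p.2) 2 P := (memLp_fst μ hY).sub (memLp_snd μ hY)
  have normint : Integrable
      (fun p : Ω × Ω => ∫ z : ℝ × ℝ, ‖Ψ (p, z)‖ ∂(volume.prod volume)) P := by
    have e : (fun p : Ω × Ω => ∫ z : ℝ × ℝ, ‖Ψ (p, z)‖ ∂(volume.prod volume))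
        = fun p : Ω × Ω => |X p.1 - X p.2| * |Y p.1 - Y p.2| := by
      funext p
      simp only [hΨ]
      exact integral_norm_gg_prod _ _ _ _
    rw [e]
    have h := (l2_mul_integrable P h2X h2Y).abs
    exact h.congr (ae_of_all _ fun p => (abs_mul _ _))
  have hΨint : Integrable Ψ (P.prod (volume.prod volume)) :=
    (integrable_prod_iff hΨm.aestronglyMeasurable).2 ⟨ae_of_all _ sect, normint⟩
  -- pointwise value of the inner integral over the probability space
  have claim : ∀ z : ℝ × ℝ, ∫ p, Ψ (p, z) ∂P = 2 * K z := by
    intro z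
    have hS : MeasurableSet {ω | z.1 < X ω} := measurableSet_lt measurable_const hmX
    have hT : MeasurableSet {ω | z.2 < Y ω} := measurableSet_lt measurable_const hmY
    have hA : MemLp ({ω | z.1 < X ω}.indicator (1 : Ω → ℝ)) 2 μ :=
      memLp_indicator_const 2 hS 1 (Or.inr (measure_ne_top μ _))
    have hB : MemLp ({ω | z.2 < Y ω}.indicator (1 : Ω → ℝ)) 2 μ :=
      memLp_indicator_const 2 hT 1 (Or.inr (measure_ne_top μ _))
    have e : (fun p : Ω × Ω => Ψ (p, z))
        = fun p : Ω × Ω => ({ω | z.1 < X ω}.indicator (1 : Ω → ℝ) p.1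
            - {ω | z.1 < X ω}.indicator (1 : Ω → ℝ) p.2)
          * ({ω | z.2 < Y ω}.indicator (1 : Ω → ℝ) p.1
            - {ω | z.2 < Y ω}.indicator (1 : Ω → ℝ) p.2) := by
      funext p
      simp [hΨ, gg, Set.indicator_apply]
    rw [e, expand μ hA hB]
    have eAB : ∀ ω, {ω | z.1 < X ω}.indicator (1 : Ω → ℝ) ω
        * {ω | z.2 < Y ω}.indicator (1 : Ω → ℝ) ω
        = ({ω | z.1 < X ω} ∩ {ω | z.2 < Y ω}).indicator (1 : Ω → ℝ) ω := by
      intro ω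
      simpa using (congrFun (Set.inter_indicator_one
        (s := {ω | z.1 < X ω}) (t := {ω | z.2 < Y ω}) (M₀ := ℝ)) ω).symm
    simp_rw [eAB]
    rw [integral_indicator_one (hS.inter hT), integral_indicator_one hS,
      integral_indicator_one hT, measureReal_def, measureReal_def, measureReal_def, hK]
    have : {ω | z.1 < X ω} ∩ {ω | z.2 < Y ω} = {ω | z.1 < X ω ∧ z.2 < Y ω} :=
      (Set.setOf_and).symm
    rw [this]
  -- integrability of K
  have iK2 : Integrable (fun z : ℝ × ℝ => ∫ p, Ψ (p, z) ∂P) (volume.prod volume) :=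
    hΨint.integral_prod_right
  have iK : Integrable K (volume.prod volume) := by
    have h : Integrable (fun z : ℝ × ℝ => 2 * K z) (volume.prod volume) :=
      iK2.congr (ae_of_all _ claim)
    exact (h.const_mul (1/2)).congr (ae_of_all _ fun z => by ring)
  refine ⟨iK, ?_⟩
  have swap : ∫ p, ∫ z, Ψ (p, z) ∂(volume.prod volume) ∂P
      = ∫ z, ∫ p, Ψ (p, z) ∂P ∂(volume.prod volume) :=
    integral_integral_swap hΨint
  have lhs1 : ∀ p : Ω × Ω, ∫ z, Ψ (p, z) ∂(volume.prod volume)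
      = (X p.1 - X p.2) * (Y p.1 - Y p.2) := by
    intro p
    simp only [hΨ]
    exact integral_gg_prod _ _ _ _
  simp_rw [lhs1] at swap
  rw [expand μ hX hY] at swap
  rw [integral_congr_ae (ae_of_all _ claim), integral_const_mul] at swap
  linarith

section Quantile

variable (ν : Measure ℝ) [IsProbabilityMeasure ν]

lemma quantile_eq_sInf_cdf (u : ℝ) : quantile ν u = sInf {x | u ≤ cdf ν x} := by
  unfold quantile
  congr 1
  ext x
  simp [cdf_eq_real, measureReal_def]

lemma nonempty_S {u : ℝ} (h1 : u < 1) : {x | u ≤ cdf ν x}.Nonempty :=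
  (Filter.Tendsto.eventually_const_le h1 (tendsto_cdf_atTop ν)).exists

lemma bddBelow_S {u : ℝ} (h0 : 0 < u) : BddBelow {x | u ≤ cdf ν x} := by
  obtain ⟨x₀, hx₀⟩ := (Filter.Tendsto.eventually_lt_const h0 (tendsto_cdf_atBot ν)).exists
  refine ⟨x₀, fun x hx => le_of_not_gt fun hlt => ?_⟩
  exact absurd hx (not_le.2 (lt_of_le_of_lt ((monotone_cdf ν) hlt.le) hx₀))

lemma le_cdf_quantile {u : ℝ} (h0 : 0 < u) (h1 : u < 1) : u ≤ cdf ν (quantile ν u) := by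
  by_contra h
  push_neg at h
  rw [quantile_eq_sInf_cdf] at h
  have hrc : Tendsto (cdf ν) (nhdsWithin (sInf {x | u ≤ cdf ν x}) (Ici (sInf {x | u ≤ cdf ν x})))
      (nhds (cdf ν (sInf {x | u ≤ cdf ν x}))) := (cdf ν).right_continuous _
  have hev : {x | cdf ν x < u} ∈ nhdsWithin (sInf {x | u ≤ cdf ν x})
      (Ici (sInf {x | u ≤ cdf ν x})) := hrc.eventually_lt_const h
  rw [mem_nhdsGE_iff_exists_Ico_subset] at hev
  obtain ⟨u', hu', hsub⟩ := hev
  have hle : u' ≤ sInf {x | u ≤ cdf ν x} := by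
    refine le_csInf (nonempty_S ν h1) fun x hx => le_of_not_gt fun hxu => ?_
    rcases le_or_gt (sInf {x | u ≤ cdf ν x}) x with hqx | hqx
    · have hmem : x ∈ {x | cdf ν x < u} := hsub ⟨hqx, hxu⟩
      have hlt : cdf ν x < u := hmem
      have hge : u ≤ cdf ν x := hx
      linarith
    · exact absurd (csInf_le (bddBelow_S ν h0) hx) (not_le.2 hqx)
  exact absurd hle (not_le.2 hu')

lemma quantile_le_iff {u x : ℝ} (h0 : 0 < u) (h1 : u < 1) :
    quantile ν u ≤ x ↔ u ≤ cdf ν x := by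
  constructor
  · intro h
    exact (le_cdf_quantile ν h0 h1).trans ((monotone_cdf ν) h)
  · intro h
    rw [quantile_eq_sInf_cdf]
    exact csInf_le (bddBelow_S ν h0) h

lemma lt_quantile_iff {u s : ℝ} (h0 : 0 < u) (h1 : u < 1) :
    s < quantile ν u ↔ cdf ν s < u := by
  simp only [← not_le]
  exact not_congr (quantile_le_iff ν h0 h1)

lemma quantile_of_nonpos {u : ℝ} (h : u ≤ 0) : quantile ν u = 0 := by
  unfold quantile
  have hs : {x : ℝ | u ≤ (ν (Iic x)).toReal} = univ :=
    eq_univ_of_forall fun x => le_trans h ENNReal.toReal_nonneg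
  rw [hs]
  apply Real.sInf_of_not_bddBelow
  rintro ⟨b, hb⟩
  have h1 := hb (mem_univ (b - 1))
  linarith

lemma quantile_of_one_lt {u : ℝ} (h : 1 < u) : quantile ν u = 0 := by
  rw [quantile_eq_sInf_cdf]
  have hs : {x : ℝ | u ≤ cdf ν x} = ∅ := by
    apply eq_empty_of_forall_notMem
    intro x hx
    exact absurd (le_trans hx (cdf_le_one ν x)) (not_le.2 h)
  rw [hs]
  exact Real.sInf_empty

lemma quantile_char (x : ℝ) : ∀ u : ℝ, quantile ν u ≤ x ↔
    ((0 < u ∧ u < 1) ∧ u ≤ cdf ν x) ∨ ((u ≤ 0 ∨ 1 < u) ∧ 0 ≤ x)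
      ∨ (u = 1 ∧ quantile ν 1 ≤ x) := by
  intro u
  rcases le_or_gt u 0 with hu0 | hu0
  · rw [quantile_of_nonpos ν hu0]
    constructor
    · intro h
      exact Or.inr (Or.inl ⟨Or.inl hu0, h⟩)
    · rintro (⟨⟨h, _⟩, _⟩ | ⟨_, h⟩ | ⟨he, _⟩)
      · linarith
      · exact h
      · subst he; linarith
  · rcases lt_trichotomy u 1 with hu1 | hu1 | hu1
    · rw [quantile_le_iff ν hu0 hu1]
      constructor
      · intro h
        exact Or.inl ⟨⟨hu0, hu1⟩, h⟩
      · rintro (⟨_, h⟩ | ⟨h, _⟩ | ⟨he, _⟩)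
        · exact h
        · rcases h with h | h <;> linarith
        · subst he; linarith
    · subst hu1
      constructor
      · intro h
        exact Or.inr (Or.inr ⟨rfl, h⟩)
      · rintro (⟨⟨_, h⟩, _⟩ | ⟨h, _⟩ | ⟨_, h⟩)
        · linarith
        · rcases h with h | h <;> linarith
        · exact h
    · rw [quantile_of_one_lt ν hu1]
      constructor
      · intro h
        exact Or.inr (Or.inl ⟨Or.inr hu1, h⟩)
      · rintro (⟨⟨_, h⟩, _⟩ | ⟨_, h⟩ | ⟨he, _⟩)
        · linarith
        · exact h
        · subst he; linarith

lemma measurable_quantile : Measurable (quantile ν) := by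
  apply measurable_of_Iic
  intro x
  by_cases hx0 : (0 : ℝ) ≤ x <;> by_cases hx1 : quantile ν 1 ≤ x
  · have he : quantile ν ⁻¹' Iic x
        = (Ioo 0 1 ∩ {u | u ≤ cdf ν x}) ∪ ((Iic 0 ∪ Ioi 1) ∪ {1}) := by
      ext u
      rw [mem_preimage, mem_Iic, quantile_char ν x u]
      simp only [mem_union, mem_inter_iff, mem_Ioo, mem_setOf_eq, mem_Iic, mem_Ioi,
        mem_singleton_iff]
      tauto
    rw [he]
    exact ((measurableSet_Ioo.inter (measurableSet_le measurable_id measurable_const)).union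
      ((measurableSet_Iic.union measurableSet_Ioi).union (measurableSet_singleton 1)))
  · have he : quantile ν ⁻¹' Iic x
        = (Ioo 0 1 ∩ {u | u ≤ cdf ν x}) ∪ (Iic 0 ∪ Ioi 1) := by
      ext u
      rw [mem_preimage, mem_Iic, quantile_char ν x u]
      simp only [mem_union, mem_inter_iff, mem_Ioo, mem_setOf_eq, mem_Iic, mem_Ioi]
      tauto
    rw [he]
    exact ((measurableSet_Ioo.inter (measurableSet_le measurable_id measurable_const)).union
      (measurableSet_Iic.union measurableSet_Ioi))
  · have he : quantile ν ⁻¹' Iic x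
        = (Ioo 0 1 ∩ {u | u ≤ cdf ν x}) ∪ {1} := by
      ext u
      rw [mem_preimage, mem_Iic, quantile_char ν x u]
      simp only [mem_union, mem_inter_iff, mem_Ioo, mem_setOf_eq, mem_singleton_iff]
      tauto
    rw [he]
    exact ((measurableSet_Ioo.inter (measurableSet_le measurable_id measurable_const)).union
      (measurableSet_singleton 1))
  · have he : quantile ν ⁻¹' Iic x = (Ioo 0 1 ∩ {u | u ≤ cdf ν x}) := by
      ext u
      rw [mem_preimage, mem_Iic, quantile_char ν x u]
      simp only [mem_inter_iff, mem_Ioo, mem_setOf_eq]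
      tauto
    rw [he]
    exact (measurableSet_Ioo.inter (measurableSet_le measurable_id measurable_const))

end Quantile

section Coupling

lemma restrict_Icc_eq_Ioo (A : Set ℝ) (hA : MeasurableSet A) :
    (volume.restrict (Icc (0:ℝ) 1)) A = volume (A ∩ Ioo 0 1) := by
  rw [Measure.restrict_apply hA]
  refine measure_congr ?_
  exact Filter.EventuallyEq.inter (Filter.EventuallyEq.refl _ _)
    (MeasureTheory.Ioo_ae_eq_Icc (μ := volume) (a := (0:ℝ)) (b := (1:ℝ))).symm

variable (ν : Measure ℝ) [IsProbabilityMeasure ν]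

lemma map_quantile_eq : (volume.restrict (Icc (0:ℝ) 1)).map (quantile ν) = ν := by
  refine MeasureTheory.Measure.ext_of_Iic _ _ fun x => ?_
  rw [Measure.map_apply (measurable_quantile ν) measurableSet_Iic,
    restrict_Icc_eq_Ioo _ (measurable_quantile ν measurableSet_Iic)]
  have hset : quantile ν ⁻¹' Iic x ∩ Ioo 0 1 = Ioo 0 1 ∩ Iic (cdf ν x) := by
    ext u
    simp only [mem_inter_iff, mem_preimage, mem_Iic, mem_Ioo]
    constructor
    · rintro ⟨hq, h0, h1⟩
      exact ⟨⟨h0, h1⟩, (quantile_le_iff ν h0 h1).1 hq⟩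
    · rintro ⟨⟨h0, h1⟩, hc⟩
      exact ⟨(quantile_le_iff ν h0 h1).2 hc, h0, h1⟩
  rw [hset]
  rcases lt_or_eq_of_le (cdf_le_one ν x) with h1 | h1
  · have he : Ioo (0:ℝ) 1 ∩ Iic (cdf ν x) = Ioc 0 (cdf ν x) := by
      ext u
      simp only [mem_inter_iff, mem_Ioo, mem_Iic, mem_Ioc]
      constructor
      · rintro ⟨⟨h0, _⟩, hc⟩
        exact ⟨h0, hc⟩
      · rintro ⟨h0, hc⟩
        exact ⟨⟨h0, lt_of_le_of_lt hc h1⟩, hc⟩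
    rw [he, Real.volume_Ioc, ← ofReal_cdf ν x]
    simp
  · have he : Ioo (0:ℝ) 1 ∩ Iic (cdf ν x) = Ioo 0 1 := by
      ext u
      simp only [mem_inter_iff, mem_Ioo, mem_Iic]
      constructor
      · rintro ⟨h, _⟩
        exact h
      · intro h
        exact ⟨h, h1 ▸ h.2.le⟩
    rw [he, Real.volume_Ioo, ← ofReal_cdf ν x, ← h1]
    simp

lemma toReal_Ioi (s : ℝ) : (ν (Ioi s)).toReal = 1 - cdf ν s := by
  have h : ν (Iic s) + ν (Ioi s) = 1 := by
    rw [← measure_union (Iic_disjoint_Ioi le_rfl) measurableSet_Ioi, Iic_union_Ioi, measure_univ]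
  have h2 := congrArg ENNReal.toReal h
  rw [ENNReal.toReal_add (measure_ne_top ν _) (measure_ne_top ν _), ENNReal.toReal_one] at h2
  rw [cdf_eq_real, measureReal_def]
  linarith

lemma muU_marg (s : ℝ) :
    ((volume.restrict (Icc (0:ℝ) 1)) {u | s < quantile ν u}).toReal = 1 - cdf ν s := by
  have he : {u | s < quantile ν u} = quantile ν ⁻¹' Ioi s := rfl
  rw [he, ← Measure.map_apply (measurable_quantile ν) measurableSet_Ioi, map_quantile_eq,
    toReal_Ioi]

lemma muU_joint (ν₁ ν₂ : Measure ℝ) [IsProbabilityMeasure ν₁] [IsProbabilityMeasure ν₂]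
    (s t : ℝ) :
    ((volume.restrict (Icc (0:ℝ) 1)) {u | s < quantile ν₁ u ∧ t < quantile ν₂ u}).toReal
      = min (1 - cdf ν₁ s) (1 - cdf ν₂ t) := by
  have hms : MeasurableSet {u | s < quantile ν₁ u} :=
    measurableSet_lt measurable_const (measurable_quantile ν₁)
  have hmt : MeasurableSet {u | t < quantile ν₂ u} :=
    measurableSet_lt measurable_const (measurable_quantile ν₂)
  have hsa : {u | s < quantile ν₁ u ∧ t < quantile ν₂ u}
      = {u | s < quantile ν₁ u} ∩ {u | t < quantile ν₂ u} := Set.setOf_and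
  rw [hsa, restrict_Icc_eq_Ioo _ (hms.inter hmt)]
  have hset : ({u | s < quantile ν₁ u} ∩ {u | t < quantile ν₂ u}) ∩ Ioo 0 1
      = Ioo (max (cdf ν₁ s) (cdf ν₂ t)) 1 := by
    ext u
    simp only [mem_inter_iff, mem_setOf_eq, mem_Ioo, max_lt_iff]
    constructor
    · rintro ⟨⟨h1, h2⟩, h0, hu1⟩
      exact ⟨⟨(lt_quantile_iff ν₁ h0 hu1).1 h1, (lt_quantile_iff ν₂ h0 hu1).1 h2⟩, hu1⟩
    · rintro ⟨⟨h1, h2⟩, hu1⟩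
      have h0 : 0 < u := lt_of_le_of_lt (cdf_nonneg ν₁ s) h1
      exact ⟨⟨(lt_quantile_iff ν₁ h0 hu1).2 h1, (lt_quantile_iff ν₂ h0 hu1).2 h2⟩, h0, hu1⟩
  rw [hset, Real.volume_Ioo, ENNReal.toReal_ofReal
    (sub_nonneg.2 (max_le (cdf_le_one ν₁ s) (cdf_le_one ν₂ t)))]
  rcases le_total (cdf ν₁ s) (cdf ν₂ t) with h | h
  · rw [max_eq_right h, min_eq_right (by linarith)]
  · rw [max_eq_left h, min_eq_left (by linarith)]

end Coupling

end Frechet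

/-- The comonotonic coupling maximizes `E(X₁X₂)` among couplings with fixed marginals. -/
theorem stmt_0 {Ω : Type*} [MeasurableSpace Ω] (μ : Measure Ω) [IsProbabilityMeasure μ]
    (X₁ X₂ : Ω → ℝ) (F₁ F₂ : Measure ℝ)
    [IsProbabilityMeasure F₁] [IsProbabilityMeasure F₂]
    (hm₁ : Measurable X₁) (hm₂ : Measurable X₂)
    (hd₁ : μ.map X₁ = F₁) (hd₂ : μ.map X₂ = F₂)
    (hL₁ : MemLp X₁ 2 μ) (hL₂ : MemLp X₂ 2 μ) :
    ∫ ω, X₁ ω * X₂ ω ∂μ ≤ ∫ u in Icc (0:ℝ) 1, quantile F₁ u * quantile F₂ u := by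
  set μU : Measure ℝ := volume.restrict (Icc (0:ℝ) 1) with hμU
  haveI hPU : IsProbabilityMeasure μU :=
    ⟨by rw [hμU, Measure.restrict_apply_univ, Real.volume_Icc]; norm_num⟩
  have mQ₁ : Measurable (quantile F₁) := Frechet.measurable_quantile F₁
  have mQ₂ : Measurable (quantile F₂) := Frechet.measurable_quantile F₂
  -- square integrability of the quantile functions
  have hid₁ : MemLp id 2 F₁ := by
    rw [← hd₁]
    exact (memLp_map_measure_iff aestronglyMeasurable_id hm₁.aemeasurable).2 hL₁
  have hid₂ : MemLp id 2 F₂ := by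
    rw [← hd₂]
    exact (memLp_map_measure_iff aestronglyMeasurable_id hm₂.aemeasurable).2 hL₂
  have hQ₁ : MemLp (quantile F₁) 2 μU :=
    (memLp_map_measure_iff aestronglyMeasurable_id mQ₁.aemeasurable).1
      (by rw [hμU, Frechet.map_quantile_eq F₁]; exact hid₁)
  have hQ₂ : MemLp (quantile F₂) 2 μU :=
    (memLp_map_measure_iff aestronglyMeasurable_id mQ₂.aemeasurable).1
      (by rw [hμU, Frechet.map_quantile_eq F₂]; exact hid₂)
  -- the means agree
  have mean₁ : ∫ ω, X₁ ω ∂μ = ∫ u, quantile F₁ u ∂μU := by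
    have e1 := integral_map (φ := X₁) (f := (id : ℝ → ℝ)) hm₁.aemeasurable (by rw [hd₁]; exact aestronglyMeasurable_id)
    have e2 := integral_map (φ := quantile F₁) (f := (id : ℝ → ℝ)) (μ := μU)
      mQ₁.aemeasurable (by rw [hμU, Frechet.map_quantile_eq F₁]; exact aestronglyMeasurable_id)
    rw [hd₁] at e1
    rw [hμU, Frechet.map_quantile_eq F₁] at e2
    simp only [id_eq] at e1 e2
    rw [← e1, ← e2]
  have mean₂ : ∫ ω, X₂ ω ∂μ = ∫ u, quantile F₂ u ∂μU := by
    have e1 := integral_map (φ := X₂) (f := (id : ℝ → ℝ)) hm₂.aemeasurable (by rw [hd₂]; exact aestronglyMeasurable_id)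
    have e2 := integral_map (φ := quantile F₂) (f := (id : ℝ → ℝ)) (μ := μU)
      mQ₂.aemeasurable (by rw [hμU, Frechet.map_quantile_eq F₂]; exact aestronglyMeasurable_id)
    rw [hd₂] at e1
    rw [hμU, Frechet.map_quantile_eq F₂] at e2
    simp only [id_eq] at e1 e2
    rw [← e1, ← e2]
  obtain ⟨iKX, hXeq⟩ := Frechet.hoeffding μ X₁ X₂ hm₁ hm₂ hL₁ hL₂
  obtain ⟨iKQ, hQeq⟩ := Frechet.hoeffding μU (quantile F₁) (quantile F₂) mQ₁ mQ₂ hQ₁ hQ₂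
  rw [hXeq, hQeq, mean₁, mean₂]
  refine add_le_add_right (integral_mono iKX iKQ fun z => ?_) _
  simp only
  have m1 : (μ {ω | z.1 < X₁ ω}).toReal = 1 - cdf F₁ z.1 := by
    have he : {ω | z.1 < X₁ ω} = X₁ ⁻¹' Ioi z.1 := rfl
    rw [he, ← Measure.map_apply hm₁ measurableSet_Ioi, hd₁, Frechet.toReal_Ioi]
  have m2 : (μ {ω | z.2 < X₂ ω}).toReal = 1 - cdf F₂ z.2 := by
    have he : {ω | z.2 < X₂ ω} = X₂ ⁻¹' Ioi z.2 := rfl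
    rw [he, ← Measure.map_apply hm₂ measurableSet_Ioi, hd₂, Frechet.toReal_Ioi]
  have mq1 : (μU {u | z.1 < quantile F₁ u}).toReal = 1 - cdf F₁ z.1 := by
    rw [hμU]; exact Frechet.muU_marg F₁ z.1
  have mq2 : (μU {u | z.2 < quantile F₂ u}).toReal = 1 - cdf F₂ z.2 := by
    rw [hμU]; exact Frechet.muU_marg F₂ z.2
  have mjoint : (μU {u | z.1 < quantile F₁ u ∧ z.2 < quantile F₂ u}).toReal
      = min (1 - cdf F₁ z.1) (1 - cdf F₂ z.2) := by
    rw [hμU]; exact Frechet.muU_joint F₁ F₂ z.1 z.2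
  have hb1 : (μ {ω | z.1 < X₁ ω ∧ z.2 < X₂ ω}).toReal ≤ 1 - cdf F₁ z.1 := by
    rw [← m1]
    exact ENNReal.toReal_mono (measure_ne_top μ _) (measure_mono fun ω h => h.1)
  have hb2 : (μ {ω | z.1 < X₁ ω ∧ z.2 < X₂ ω}).toReal ≤ 1 - cdf F₂ z.2 := by
    rw [← m2]
    exact ENNReal.toReal_mono (measure_ne_top μ _) (measure_mono fun ω h => h.2)
  rw [m1, m2, mq1, mq2, mjoint]
  exact sub_le_sub_right (le_min hb1 hb2) _
end

section
/- For any two square-integrable real random variables X₁ ~ F₁ and X₂ ~ F₂ with given marginal distributions, E(X₁X₂) ≥ E(F₁⁻¹(U)F₂⁻¹(1−U)) where U is uniform on [0,1], i.e., the antimonotonic coupling minimizes the expected product in dimension 2. -/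
open MeasureTheory Set Filter ProbabilityTheory
open scoped ENNReal Topology

set_option linter.unusedSectionVars false
set_option maxHeartbeats 2000000

section Quantile

variable {ν : Measure ℝ} [IsProbabilityMeasure ν] {u s : ℝ}

lemma quantile_set_eq (ν : Measure ℝ) [IsProbabilityMeasure ν] (u : ℝ) :
    {x : ℝ | u ≤ (ν (Iic x)).toReal} = {x : ℝ | u ≤ cdf ν x} := by
  simp [cdf_eq_real, measureReal_def]

lemma quantile_bddBelow (h0 : 0 < u) : BddBelow {x : ℝ | u ≤ cdf ν x} := by
  obtain ⟨x₀, hx₀⟩ := (Filter.Tendsto.eventually_lt_const h0 (tendsto_cdf_atBot ν)).exists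
  exact ⟨x₀, fun x hx => le_of_not_gt fun hlt =>
    absurd (le_trans hx (monotone_cdf ν hlt.le)) (not_le.2 hx₀)⟩

lemma quantile_nonempty (h1 : u < 1) : {x : ℝ | u ≤ cdf ν x}.Nonempty := by
  obtain ⟨x, hx⟩ := (Filter.Tendsto.eventually_const_le h1 (tendsto_cdf_atTop ν)).exists
  exact ⟨x, hx⟩

lemma quantile_le_iff (h0 : 0 < u) (h1 : u < 1) :
    quantile ν u ≤ s ↔ u ≤ cdf ν s := by
  rw [quantile, quantile_set_eq]
  set S := {x : ℝ | u ≤ cdf ν x} with hS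
  have hne : S.Nonempty := quantile_nonempty h1
  have hbdd : BddBelow S := quantile_bddBelow h0
  constructor
  · intro h
    have hIoi : Ioi (sInf S) ⊆ S := by
      intro x hx
      obtain ⟨y, hy, hyx⟩ := exists_lt_of_csInf_lt hne hx
      exact le_trans hy (monotone_cdf ν hyx.le)
    have htend : Tendsto (cdf ν) (𝓝[>] (sInf S)) (𝓝 (cdf ν (sInf S))) :=
      ((cdf ν).right_continuous (sInf S)).mono_left (nhdsWithin_mono _ Ioi_subset_Ici_self)
    have hu : u ≤ cdf ν (sInf S) := by
      refine ge_of_tendsto htend ?_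
      filter_upwards [self_mem_nhdsWithin] with x hx using hIoi hx
    exact le_trans hu (monotone_cdf ν h)
  · intro h
    exact csInf_le hbdd h

lemma lt_quantile_iff (h0 : 0 < u) (h1 : u < 1) :
    s < quantile ν u ↔ cdf ν s < u := by
  rw [← not_le, ← not_le, quantile_le_iff h0 h1]

end Quantile

/-- Measurable modification of the quantile function, junk value 0 outside `(0,1)`. -/
noncomputable def qf (ν : Measure ℝ) (u : ℝ) : ℝ :=
  if u ∈ Ioo (0:ℝ) 1 then quantile ν u else 0

lemma qf_preimage_Iic (ν : Measure ℝ) [IsProbabilityMeasure ν] (s : ℝ) :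
    qf ν ⁻¹' Iic s =
      (Ioo 0 1 ∩ Iic (cdf ν s)) ∪ (if (0:ℝ) ≤ s then (Ioo (0:ℝ) 1)ᶜ else ∅) := by
  ext u
  by_cases hu : u ∈ Ioo (0:ℝ) 1
  · have hq : qf ν u ≤ s ↔ u ≤ cdf ν s := by
      rw [qf, if_pos hu]; exact quantile_le_iff hu.1 hu.2
    simp only [mem_preimage, mem_Iic, mem_union, mem_inter_iff, hu, true_and]
    rw [hq]
    by_cases h0s : (0:ℝ) ≤ s <;> simp [h0s, hu]
  · simp only [mem_preimage, mem_Iic, qf, if_neg hu, mem_union, mem_inter_iff, hu, false_and]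
    by_cases h0s : (0:ℝ) ≤ s <;> simp [h0s, hu]

lemma measurable_qf (ν : Measure ℝ) [IsProbabilityMeasure ν] : Measurable (qf ν) := by
  apply measurable_of_Iic
  intro s
  rw [qf_preimage_Iic]
  by_cases h0s : (0:ℝ) ≤ s <;>
    simp [h0s, (measurableSet_Ioo.inter measurableSet_Iic).union, measurableSet_Ioo.compl,
      MeasurableSet.union, MeasurableSet.empty]

lemma volume_Ioo_inter_Iic {c : ℝ} (h0 : 0 ≤ c) (h1 : c ≤ 1) :
    volume (Ioo (0:ℝ) 1 ∩ Iic c) = ENNReal.ofReal c := by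
  rcases lt_or_ge c 1 with hc | hc
  · have : Ioo (0:ℝ) 1 ∩ Iic c = Ioc 0 c := by
      ext u
      constructor
      · rintro ⟨⟨h₁, _⟩, h₃⟩; exact ⟨h₁, h₃⟩
      · rintro ⟨h₁, h₂⟩; exact ⟨⟨h₁, lt_of_le_of_lt h₂ hc⟩, h₂⟩
    rw [this, Real.volume_Ioc, sub_zero]
  · have hceq : c = 1 := le_antisymm h1 hc
    have : Ioo (0:ℝ) 1 ∩ Iic c = Ioo 0 1 := by
      rw [hceq]; exact inter_eq_left.2 fun u hu => le_of_lt hu.2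
    rw [this, Real.volume_Ioo, hceq]; norm_num

instance : IsProbabilityMeasure (volume.restrict (Ioo (0:ℝ) 1)) := by
  constructor
  rw [Measure.restrict_apply MeasurableSet.univ, univ_inter, Real.volume_Ioo]
  norm_num

lemma map_qf (ν : Measure ℝ) [IsProbabilityMeasure ν] :
    (volume.restrict (Ioo (0:ℝ) 1)).map (qf ν) = ν := by
  have hmeas := measurable_qf ν
  have : IsProbabilityMeasure ((volume.restrict (Ioo (0:ℝ) 1)).map (qf ν)) :=
    Measure.isProbabilityMeasure_map hmeas.aemeasurable
  refine Measure.ext_of_Iic _ _ fun s => ?_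
  rw [Measure.map_apply hmeas measurableSet_Iic,
    Measure.restrict_apply (hmeas measurableSet_Iic), qf_preimage_Iic]
  have : ((Ioo 0 1 ∩ Iic (cdf ν s)) ∪ (if (0:ℝ) ≤ s then (Ioo (0:ℝ) 1)ᶜ else ∅)) ∩ Ioo 0 1
      = Ioo (0:ℝ) 1 ∩ Iic (cdf ν s) := by
    rw [inter_comm, inter_union_distrib_left, ← inter_assoc, inter_self]
    have h2 : Ioo (0:ℝ) 1 ∩ (if (0:ℝ) ≤ s then (Ioo (0:ℝ) 1)ᶜ else ∅) = ∅ := by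
      split
      · exact inter_compl_self _
      · exact inter_empty _
    rw [h2, union_empty]
  rw [this, volume_Ioo_inter_Iic (cdf_nonneg ν s) (cdf_le_one ν s), ofReal_cdf]

lemma measurePreserving_one_sub :
    MeasurePreserving (fun u : ℝ => 1 - u) (volume.restrict (Ioo (0:ℝ) 1))
      (volume.restrict (Ioo (0:ℝ) 1)) := by
  have h : MeasurePreserving (fun u : ℝ => 1 - u) volume volume := by
    have h1 : MeasurePreserving (fun u : ℝ => -u) volume volume :=
      Measure.measurePreserving_neg volume
    have h2 : MeasurePreserving (fun u : ℝ => 1 + u) volume volume :=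
      measurePreserving_add_left volume 1
    have : (fun u : ℝ => 1 - u) = (fun u : ℝ => 1 + u) ∘ (fun u : ℝ => -u) := by
      funext u; simp [sub_eq_add_neg]
    rw [this]
    exact h2.comp h1
  have hpre : (fun u : ℝ => 1 - u) ⁻¹' (Ioo (0:ℝ) 1) = Ioo (0:ℝ) 1 := by
    ext u; simp only [mem_preimage, mem_Ioo]; constructor <;> rintro ⟨a, b⟩ <;>
      constructor <;> linarith
  have := h.restrict_preimage (measurableSet_Ioo (a := (0:ℝ)) (b := 1))
  rwa [hpre] at this

section Key

variable {Ω : Type*} [MeasurableSpace Ω] {X Y : Ω → ℝ}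

noncomputable def qA (μ : Measure Ω) (X Y : Ω → ℝ) : ℝ≥0∞ :=
  ∫⁻ s in Ioi (0:ℝ), ∫⁻ t in Ioi (0:ℝ), μ {ω | s < X ω ∧ t < Y ω}

noncomputable def qB (μ : Measure Ω) (X Y : Ω → ℝ) : ℝ≥0∞ :=
  ∫⁻ s in Ioi (0:ℝ), ∫⁻ t in Ioi (0:ℝ), μ {ω | X ω ≤ -s ∧ Y ω ≤ -t}

noncomputable def qC (μ : Measure Ω) (X Y : Ω → ℝ) : ℝ≥0∞ :=
  ∫⁻ s in Ioi (0:ℝ), ∫⁻ t in Ioi (0:ℝ), μ {ω | s < X ω ∧ Y ω ≤ -t}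

noncomputable def qD (μ : Measure Ω) (X Y : Ω → ℝ) : ℝ≥0∞ :=
  ∫⁻ s in Ioi (0:ℝ), ∫⁻ t in Ioi (0:ℝ), μ {ω | X ω ≤ -s ∧ t < Y ω}

lemma lint_meas_lt (μ : Measure Ω) (hY : Measurable Y) :
    ∫⁻ t in Ioi (0:ℝ), μ {ω | t < Y ω} = ∫⁻ ω, ENNReal.ofReal (max (Y ω) 0) ∂μ := by
  have h := lintegral_eq_lintegral_meas_lt (f := fun ω => max (Y ω) 0) μ
    (ae_of_all _ fun ω => le_max_right _ _) (hY.max measurable_const).aemeasurable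
  refine Eq.trans ?_ h.symm
  refine setLIntegral_congr_fun_ae measurableSet_Ioi (ae_of_all _ fun t ht => ?_)
  congr 1
  ext ω
  simp only [mem_setOf_eq, lt_max_iff]
  constructor
  · exact fun h => Or.inl h
  · intro h
    rcases h with h | h
    · exact h
    · exact absurd ht.out (by linarith)

lemma lint_meas_le (μ : Measure Ω) (hY : Measurable Y) :
    ∫⁻ t in Ioi (0:ℝ), μ {ω | Y ω ≤ -t} = ∫⁻ ω, ENNReal.ofReal (max (-Y ω) 0) ∂μ := by
  have h := lintegral_eq_lintegral_meas_le (f := fun ω => max (-Y ω) 0) μ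
    (ae_of_all _ fun ω => le_max_right _ _) (hY.neg.max measurable_const).aemeasurable
  refine Eq.trans ?_ h.symm
  refine setLIntegral_congr_fun_ae measurableSet_Ioi (ae_of_all _ fun t ht => ?_)
  congr 1
  ext ω
  simp only [mem_setOf_eq, le_max_iff]
  constructor
  · intro h; left; linarith
  · intro h
    rcases h with h | h
    · linarith
    · exact absurd ht.out (by linarith)

lemma qA_eq (μ : Measure Ω) (hX : Measurable X) (hY : Measurable Y) :
    qA μ X Y = ∫⁻ ω, ENNReal.ofReal (max (X ω) 0) * ENNReal.ofReal (max (Y ω) 0) ∂μ := by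
  have hd : Measurable fun ω => ENNReal.ofReal (max (Y ω) 0) :=
    (hY.max measurable_const).ennreal_ofReal
  set ν := μ.withDensity (fun ω => ENNReal.ofReal (max (Y ω) 0)) with hν
  have hstep : ∀ s : ℝ, ∫⁻ t in Ioi (0:ℝ), μ {ω | s < X ω ∧ t < Y ω} = ν {ω | s < X ω} := by
    intro s
    have hXs : MeasurableSet {ω | s < X ω} := measurableSet_lt measurable_const hX
    calc ∫⁻ t in Ioi (0:ℝ), μ {ω | s < X ω ∧ t < Y ω}
        = ∫⁻ t in Ioi (0:ℝ), (μ.restrict {ω | s < X ω}) {ω | t < Y ω} := by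
          refine setLIntegral_congr_fun_ae measurableSet_Ioi (ae_of_all _ fun t _ => ?_)
          rw [Measure.restrict_apply (measurableSet_lt measurable_const hY)]
          congr 1
          ext ω; simp only [mem_setOf_eq, mem_inter_iff]; tauto
      _ = ∫⁻ ω, ENNReal.ofReal (max (Y ω) 0) ∂(μ.restrict {ω | s < X ω}) := lint_meas_lt _ hY
      _ = ν {ω | s < X ω} := (withDensity_apply _ hXs).symm
  calc qA μ X Y = ∫⁻ s in Ioi (0:ℝ), ν {ω | s < X ω} :=
        setLIntegral_congr_fun_ae measurableSet_Ioi (ae_of_all _ fun s _ => hstep s)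
    _ = ∫⁻ ω, ENNReal.ofReal (max (X ω) 0) ∂ν := lint_meas_lt ν hX
    _ = ∫⁻ ω, ENNReal.ofReal (max (X ω) 0) * ENNReal.ofReal (max (Y ω) 0) ∂μ := by
        rw [lintegral_withDensity_eq_lintegral_mul μ hd (hX.max measurable_const).ennreal_ofReal]
        simp only [Pi.mul_apply, mul_comm]

lemma qB_eq (μ : Measure Ω) (hX : Measurable X) (hY : Measurable Y) :
    qB μ X Y = ∫⁻ ω, ENNReal.ofReal (max (-X ω) 0) * ENNReal.ofReal (max (-Y ω) 0) ∂μ := by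
  have hd : Measurable fun ω => ENNReal.ofReal (max (-Y ω) 0) :=
    (hY.neg.max measurable_const).ennreal_ofReal
  set ν := μ.withDensity (fun ω => ENNReal.ofReal (max (-Y ω) 0)) with hν
  have hstep : ∀ s : ℝ, ∫⁻ t in Ioi (0:ℝ), μ {ω | X ω ≤ -s ∧ Y ω ≤ -t} = ν {ω | X ω ≤ -s} := by
    intro s
    have hXs : MeasurableSet {ω | X ω ≤ -s} := measurableSet_le hX measurable_const
    calc ∫⁻ t in Ioi (0:ℝ), μ {ω | X ω ≤ -s ∧ Y ω ≤ -t}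
        = ∫⁻ t in Ioi (0:ℝ), (μ.restrict {ω | X ω ≤ -s}) {ω | Y ω ≤ -t} := by
          refine setLIntegral_congr_fun_ae measurableSet_Ioi (ae_of_all _ fun t _ => ?_)
          rw [Measure.restrict_apply (measurableSet_le hY measurable_const)]
          congr 1
          ext ω; simp only [mem_setOf_eq, mem_inter_iff]; tauto
      _ = ∫⁻ ω, ENNReal.ofReal (max (-Y ω) 0) ∂(μ.restrict {ω | X ω ≤ -s}) := lint_meas_le _ hY
      _ = ν {ω | X ω ≤ -s} := (withDensity_apply _ hXs).symm
  calc qB μ X Y = ∫⁻ s in Ioi (0:ℝ), ν {ω | X ω ≤ -s} :=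
        setLIntegral_congr_fun_ae measurableSet_Ioi (ae_of_all _ fun s _ => hstep s)
    _ = ∫⁻ ω, ENNReal.ofReal (max (-X ω) 0) ∂ν := lint_meas_le ν hX
    _ = ∫⁻ ω, ENNReal.ofReal (max (-X ω) 0) * ENNReal.ofReal (max (-Y ω) 0) ∂μ := by
        rw [lintegral_withDensity_eq_lintegral_mul μ hd (show Measurable fun ω => ENNReal.ofReal (max (-X ω) 0) from (hX.neg.max measurable_const).ennreal_ofReal)]
        simp only [Pi.mul_apply, mul_comm]

lemma qC_eq (μ : Measure Ω) (hX : Measurable X) (hY : Measurable Y) :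
    qC μ X Y = ∫⁻ ω, ENNReal.ofReal (max (X ω) 0) * ENNReal.ofReal (max (-Y ω) 0) ∂μ := by
  have hd : Measurable fun ω => ENNReal.ofReal (max (-Y ω) 0) :=
    (hY.neg.max measurable_const).ennreal_ofReal
  set ν := μ.withDensity (fun ω => ENNReal.ofReal (max (-Y ω) 0)) with hν
  have hstep : ∀ s : ℝ, ∫⁻ t in Ioi (0:ℝ), μ {ω | s < X ω ∧ Y ω ≤ -t} = ν {ω | s < X ω} := by
    intro s
    have hXs : MeasurableSet {ω | s < X ω} := measurableSet_lt measurable_const hX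
    calc ∫⁻ t in Ioi (0:ℝ), μ {ω | s < X ω ∧ Y ω ≤ -t}
        = ∫⁻ t in Ioi (0:ℝ), (μ.restrict {ω | s < X ω}) {ω | Y ω ≤ -t} := by
          refine setLIntegral_congr_fun_ae measurableSet_Ioi (ae_of_all _ fun t _ => ?_)
          rw [Measure.restrict_apply (measurableSet_le hY measurable_const)]
          congr 1
          ext ω; simp only [mem_setOf_eq, mem_inter_iff]; tauto
      _ = ∫⁻ ω, ENNReal.ofReal (max (-Y ω) 0) ∂(μ.restrict {ω | s < X ω}) := lint_meas_le _ hY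
      _ = ν {ω | s < X ω} := (withDensity_apply _ hXs).symm
  calc qC μ X Y = ∫⁻ s in Ioi (0:ℝ), ν {ω | s < X ω} :=
        setLIntegral_congr_fun_ae measurableSet_Ioi (ae_of_all _ fun s _ => hstep s)
    _ = ∫⁻ ω, ENNReal.ofReal (max (X ω) 0) ∂ν := lint_meas_lt ν hX
    _ = ∫⁻ ω, ENNReal.ofReal (max (X ω) 0) * ENNReal.ofReal (max (-Y ω) 0) ∂μ := by
        rw [lintegral_withDensity_eq_lintegral_mul μ hd (hX.max measurable_const).ennreal_ofReal]
        simp only [Pi.mul_apply, mul_comm]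

lemma qD_eq (μ : Measure Ω) (hX : Measurable X) (hY : Measurable Y) :
    qD μ X Y = ∫⁻ ω, ENNReal.ofReal (max (-X ω) 0) * ENNReal.ofReal (max (Y ω) 0) ∂μ := by
  have hd : Measurable fun ω => ENNReal.ofReal (max (Y ω) 0) :=
    (hY.max measurable_const).ennreal_ofReal
  set ν := μ.withDensity (fun ω => ENNReal.ofReal (max (Y ω) 0)) with hν
  have hstep : ∀ s : ℝ, ∫⁻ t in Ioi (0:ℝ), μ {ω | X ω ≤ -s ∧ t < Y ω} = ν {ω | X ω ≤ -s} := by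
    intro s
    have hXs : MeasurableSet {ω | X ω ≤ -s} := measurableSet_le hX measurable_const
    calc ∫⁻ t in Ioi (0:ℝ), μ {ω | X ω ≤ -s ∧ t < Y ω}
        = ∫⁻ t in Ioi (0:ℝ), (μ.restrict {ω | X ω ≤ -s}) {ω | t < Y ω} := by
          refine setLIntegral_congr_fun_ae measurableSet_Ioi (ae_of_all _ fun t _ => ?_)
          rw [Measure.restrict_apply (measurableSet_lt measurable_const hY)]
          congr 1
          ext ω; simp only [mem_setOf_eq, mem_inter_iff]; tauto
      _ = ∫⁻ ω, ENNReal.ofReal (max (Y ω) 0) ∂(μ.restrict {ω | X ω ≤ -s}) := lint_meas_lt _ hY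
      _ = ν {ω | X ω ≤ -s} := (withDensity_apply _ hXs).symm
  calc qD μ X Y = ∫⁻ s in Ioi (0:ℝ), ν {ω | X ω ≤ -s} :=
        setLIntegral_congr_fun_ae measurableSet_Ioi (ae_of_all _ fun s _ => hstep s)
    _ = ∫⁻ ω, ENNReal.ofReal (max (-X ω) 0) ∂ν := lint_meas_le ν hX
    _ = ∫⁻ ω, ENNReal.ofReal (max (-X ω) 0) * ENNReal.ofReal (max (Y ω) 0) ∂μ := by
        rw [lintegral_withDensity_eq_lintegral_mul μ hd (show Measurable fun ω => ENNReal.ofReal (max (-X ω) 0) from (hX.neg.max measurable_const).ennreal_ofReal)]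
        simp only [Pi.mul_apply, mul_comm]


lemma part_mul_integrable (μ : Measure Ω) (hX : Measurable X) (hY : Measurable Y)
    (h2X : MemLp X 2 μ) (h2Y : MemLp Y 2 μ) (f g : ℝ → ℝ)
    (hf : f = (fun a => max a 0) ∨ f = (fun a => max (-a) 0))
    (hg : g = (fun a => max a 0) ∨ g = (fun a => max (-a) 0)) :
    Integrable (fun ω => f (X ω) * g (Y ω)) μ := by
  have hfm : Measurable f := by
    rcases hf with rfl | rfl
    · exact measurable_id.max measurable_const
    · exact measurable_id.neg.max measurable_const
  have hgm : Measurable g := by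
    rcases hg with rfl | rfl
    · exact measurable_id.max measurable_const
    · exact measurable_id.neg.max measurable_const
  have hfb : ∀ a : ℝ, 0 ≤ f a ∧ f a ≤ |a| := by
    rcases hf with rfl | rfl <;> intro a <;>
      exact ⟨le_max_right _ _, max_le (by cases abs_cases a <;> linarith) (abs_nonneg a)⟩
  have hgb : ∀ a : ℝ, 0 ≤ g a ∧ g a ≤ |a| := by
    rcases hg with rfl | rfl <;> intro a <;>
      exact ⟨le_max_right _ _, max_le (by cases abs_cases a <;> linarith) (abs_nonneg a)⟩
  have hint : Integrable (fun ω => (X ω ^ 2 + Y ω ^ 2) / 2) μ :=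
    (h2X.integrable_sq.add h2Y.integrable_sq).div_const 2
  refine hint.mono' ((hfm.comp hX).mul (hgm.comp hY)).aestronglyMeasurable
    (ae_of_all _ fun ω => ?_)
  have h1 := hfb (X ω); have h2 := hgb (Y ω)
  have habs : |f (X ω) * g (Y ω)| = f (X ω) * g (Y ω) :=
    abs_of_nonneg (mul_nonneg h1.1 h2.1)
  rw [Real.norm_eq_abs, habs]
  have : f (X ω) * g (Y ω) ≤ |X ω| * |Y ω| :=
    mul_le_mul h1.2 h2.2 h2.1 (abs_nonneg _)
  nlinarith [sq_nonneg (|X ω| - |Y ω|), sq_abs (X ω), sq_abs (Y ω)]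

lemma key (μ : Measure Ω) [IsProbabilityMeasure μ] (hX : Measurable X) (hY : Measurable Y)
    (h2X : MemLp X 2 μ) (h2Y : MemLp Y 2 μ) :
    qA μ X Y ≠ ∞ ∧ qB μ X Y ≠ ∞ ∧ qC μ X Y ≠ ∞ ∧ qD μ X Y ≠ ∞ ∧
      ∫ ω, X ω * Y ω ∂μ =
        (qA μ X Y).toReal + (qB μ X Y).toReal - (qC μ X Y).toReal - (qD μ X Y).toReal := by
  set p : ℝ → ℝ := fun a => max a 0 with hp
  set m : ℝ → ℝ := fun a => max (-a) 0 with hm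
  have hiA := part_mul_integrable μ hX hY h2X h2Y p p (Or.inl rfl) (Or.inl rfl)
  have hiB := part_mul_integrable μ hX hY h2X h2Y m m (Or.inr rfl) (Or.inr rfl)
  have hiC := part_mul_integrable μ hX hY h2X h2Y p m (Or.inl rfl) (Or.inr rfl)
  have hiD := part_mul_integrable μ hX hY h2X h2Y m p (Or.inr rfl) (Or.inl rfl)
  have hofA : ∀ ω, ENNReal.ofReal (p (X ω) * p (Y ω))
      = ENNReal.ofReal (max (X ω) 0) * ENNReal.ofReal (max (Y ω) 0) := fun ω =>
    ENNReal.ofReal_mul (le_max_right _ _)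
  have hofB : ∀ ω, ENNReal.ofReal (m (X ω) * m (Y ω))
      = ENNReal.ofReal (max (-X ω) 0) * ENNReal.ofReal (max (-Y ω) 0) := fun ω =>
    ENNReal.ofReal_mul (le_max_right _ _)
  have hofC : ∀ ω, ENNReal.ofReal (p (X ω) * m (Y ω))
      = ENNReal.ofReal (max (X ω) 0) * ENNReal.ofReal (max (-Y ω) 0) := fun ω =>
    ENNReal.ofReal_mul (le_max_right _ _)
  have hofD : ∀ ω, ENNReal.ofReal (m (X ω) * p (Y ω))
      = ENNReal.ofReal (max (-X ω) 0) * ENNReal.ofReal (max (Y ω) 0) := fun ω =>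
    ENNReal.ofReal_mul (le_max_right _ _)
  have hqA : qA μ X Y = ∫⁻ ω, ENNReal.ofReal (p (X ω) * p (Y ω)) ∂μ := by
    rw [qA_eq μ hX hY]; exact (lintegral_congr fun ω => (hofA ω)).symm
  have hqB : qB μ X Y = ∫⁻ ω, ENNReal.ofReal (m (X ω) * m (Y ω)) ∂μ := by
    rw [qB_eq μ hX hY]; exact (lintegral_congr fun ω => (hofB ω)).symm
  have hqC : qC μ X Y = ∫⁻ ω, ENNReal.ofReal (p (X ω) * m (Y ω)) ∂μ := by
    rw [qC_eq μ hX hY]; exact (lintegral_congr fun ω => (hofC ω)).symm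
  have hqD : qD μ X Y = ∫⁻ ω, ENNReal.ofReal (m (X ω) * p (Y ω)) ∂μ := by
    rw [qD_eq μ hX hY]; exact (lintegral_congr fun ω => (hofD ω)).symm
  have hnn : ∀ (f g : ℝ → ℝ), (f = p ∨ f = m) → (g = p ∨ g = m) →
      (fun _ => (0:ℝ)) ≤ᵐ[μ] fun ω => f (X ω) * g (Y ω) := by
    intro f g hf hg
    refine ae_of_all _ fun ω => mul_nonneg ?_ ?_ <;>
      [rcases hf with rfl | rfl; rcases hg with rfl | rfl] <;> exact le_max_right _ _
  have hfinA : qA μ X Y ≠ ∞ := by rw [hqA]; exact hiA.lintegral_lt_top.ne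
  have hfinB : qB μ X Y ≠ ∞ := by rw [hqB]; exact hiB.lintegral_lt_top.ne
  have hfinC : qC μ X Y ≠ ∞ := by rw [hqC]; exact hiC.lintegral_lt_top.ne
  have hfinD : qD μ X Y ≠ ∞ := by rw [hqD]; exact hiD.lintegral_lt_top.ne
  refine ⟨hfinA, hfinB, hfinC, hfinD, ?_⟩
  have hIA : ∫ ω, p (X ω) * p (Y ω) ∂μ = (qA μ X Y).toReal := by
    rw [integral_eq_lintegral_of_nonneg_ae (hnn p p (Or.inl rfl) (Or.inl rfl))
      hiA.aestronglyMeasurable, hqA]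
  have hIB : ∫ ω, m (X ω) * m (Y ω) ∂μ = (qB μ X Y).toReal := by
    rw [integral_eq_lintegral_of_nonneg_ae (hnn m m (Or.inr rfl) (Or.inr rfl))
      hiB.aestronglyMeasurable, hqB]
  have hIC : ∫ ω, p (X ω) * m (Y ω) ∂μ = (qC μ X Y).toReal := by
    rw [integral_eq_lintegral_of_nonneg_ae (hnn p m (Or.inl rfl) (Or.inr rfl))
      hiC.aestronglyMeasurable, hqC]
  have hID : ∫ ω, m (X ω) * p (Y ω) ∂μ = (qD μ X Y).toReal := by
    rw [integral_eq_lintegral_of_nonneg_ae (hnn m p (Or.inr rfl) (Or.inl rfl))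
      hiD.aestronglyMeasurable, hqD]
  have hid : (fun ω => X ω * Y ω) = fun ω =>
      p (X ω) * p (Y ω) + m (X ω) * m (Y ω) - p (X ω) * m (Y ω) - m (X ω) * p (Y ω) := by
    funext ω
    have hx := max_zero_sub_max_neg_zero_eq_self (X ω)
    have hy := max_zero_sub_max_neg_zero_eq_self (Y ω)
    have : X ω * Y ω = (max (X ω) 0 - max (-X ω) 0) * (max (Y ω) 0 - max (-Y ω) 0) := by
      rw [hx, hy]
    rw [this]; simp only [hp, hm]; ring
  rw [hid]
  have e1 := integral_sub (Integrable.sub (hiA.add hiB) hiC) hiD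
  have e2 := integral_sub (hiA.add hiB) hiC
  have e3 := integral_add hiA hiB
  simp only [Pi.add_apply, Pi.sub_apply] at e1 e2 e3
  rw [e1, e2, e3, hIA, hIB, hIC, hID]
end Key

section Comp

variable {Ω : Type*} [MeasurableSpace Ω] (μ : Measure Ω) [IsProbabilityMeasure μ]
  (X₁ X₂ : Ω → ℝ) (F₁ F₂ : Measure ℝ) [IsProbabilityMeasure F₁] [IsProbabilityMeasure F₂]
  (hm₁ : Measurable X₁) (hm₂ : Measurable X₂)
  (hd₁ : μ.map X₁ = F₁) (hd₂ : μ.map X₂ = F₂)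

-- membership iffs on (0,1)
lemma qf_lt_iff {ν : Measure ℝ} [IsProbabilityMeasure ν] {u s : ℝ} (hu : u ∈ Ioo (0:ℝ) 1) :
    s < qf ν u ↔ cdf ν s < u := by
  rw [qf, if_pos hu]; exact lt_quantile_iff hu.1 hu.2

lemma qf_le_iff {ν : Measure ℝ} [IsProbabilityMeasure ν] {u s : ℝ} (hu : u ∈ Ioo (0:ℝ) 1) :
    qf ν u ≤ s ↔ u ≤ cdf ν s := by
  rw [qf, if_pos hu]; exact quantile_le_iff hu.1 hu.2

lemma one_sub_mem {u : ℝ} (hu : u ∈ Ioo (0:ℝ) 1) : 1 - u ∈ Ioo (0:ℝ) 1 := by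
  constructor <;> [linarith [hu.2]; linarith [hu.1]]

include hm₁ hd₁ in
lemma marg₁ (a : ℝ) : μ (X₁ ⁻¹' Iic a) = ENNReal.ofReal (cdf F₁ a) := by
  rw [ofReal_cdf F₁ a, ← hd₁, Measure.map_apply hm₁ measurableSet_Iic]

include hm₂ hd₂ in
lemma marg₂ (b : ℝ) : μ (X₂ ⁻¹' Iic b) = ENNReal.ofReal (cdf F₂ b) := by
  rw [ofReal_cdf F₂ b, ← hd₂, Measure.map_apply hm₂ measurableSet_Iic]

include hm₁ hd₁ in
lemma marg₁' (a : ℝ) : μ {ω | a < X₁ ω} = 1 - ENNReal.ofReal (cdf F₁ a) := by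
  have : {ω | a < X₁ ω} = (X₁ ⁻¹' Iic a)ᶜ := by ext ω; simp [not_le]
  rw [this, prob_compl_eq_one_sub (hm₁ measurableSet_Iic), marg₁ μ X₁ F₁ hm₁ hd₁]

include hm₂ hd₂ in
lemma marg₂' (b : ℝ) : μ {ω | b < X₂ ω} = 1 - ENNReal.ofReal (cdf F₂ b) := by
  have : {ω | b < X₂ ω} = (X₂ ⁻¹' Iic b)ᶜ := by ext ω; simp [not_le]
  rw [this, prob_compl_eq_one_sub (hm₂ measurableSet_Iic), marg₂ μ X₂ F₂ hm₂ hd₂]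

lemma ofReal_one_sub (c : ℝ) (hc : 0 ≤ c) :
    ENNReal.ofReal (1 - c) = 1 - ENNReal.ofReal c := by
  rw [ENNReal.ofReal_sub _ hc, ENNReal.ofReal_one]

include hm₁ hm₂ hd₁ hd₂ in
lemma compA (a b : ℝ) :
    (volume.restrict (Ioo (0:ℝ) 1)) {u | a < qf F₁ u ∧ b < qf F₂ (1 - u)} ≤
      μ {ω | a < X₁ ω ∧ b < X₂ ω} := by
  have hms : MeasurableSet {u | a < qf F₁ u ∧ b < qf F₂ (1 - u)} :=
    (measurableSet_lt measurable_const (measurable_qf F₁)).inter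
      (measurableSet_lt measurable_const
        ((measurable_qf F₂).comp (measurable_const.sub measurable_id)))
  rw [Measure.restrict_apply hms]
  have hsub : {u | a < qf F₁ u ∧ b < qf F₂ (1 - u)} ∩ Ioo 0 1 ⊆
      Ioo (cdf F₁ a) (1 - cdf F₂ b) := by
    rintro u ⟨⟨h1, h2⟩, hu⟩
    have e1 := (qf_lt_iff hu).1 h1
    have e2 := (qf_lt_iff (one_sub_mem hu)).1 h2
    exact ⟨e1, by linarith⟩
  refine le_trans (measure_mono hsub) ?_
  rw [Real.volume_Ioo]
  -- ofReal (1 - cdf₂ b - cdf₁ a) ≤ μ E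
  have key : μ {ω | a < X₁ ω} ≤ μ {ω | a < X₁ ω ∧ b < X₂ ω} + μ (X₂ ⁻¹' Iic b) := by
    refine le_trans (measure_mono ?_) (measure_union_le _ _)
    intro ω hω
    by_cases hb : b < X₂ ω
    · exact Or.inl ⟨hω, hb⟩
    · exact Or.inr (not_lt.1 hb)
  rw [marg₁' μ X₁ F₁ hm₁ hd₁, marg₂ μ X₂ F₂ hm₂ hd₂] at key
  have heq : ENNReal.ofReal (1 - cdf F₂ b - cdf F₁ a)
      = (1 - ENNReal.ofReal (cdf F₁ a)) - ENNReal.ofReal (cdf F₂ b) := by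
    have : 1 - cdf F₂ b - cdf F₁ a = (1 - cdf F₁ a) - cdf F₂ b := by ring
    rw [this, ENNReal.ofReal_sub _ (cdf_nonneg F₂ b), ofReal_one_sub _ (cdf_nonneg F₁ a)]
  rw [heq]
  exact tsub_le_iff_right.2 key

include hm₁ hm₂ hd₁ hd₂ in
lemma compB (a b : ℝ) :
    (volume.restrict (Ioo (0:ℝ) 1)) {u | qf F₁ u ≤ a ∧ qf F₂ (1 - u) ≤ b} ≤
      μ {ω | X₁ ω ≤ a ∧ X₂ ω ≤ b} := by
  have hms : MeasurableSet {u | qf F₁ u ≤ a ∧ qf F₂ (1 - u) ≤ b} :=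
    (measurableSet_le (measurable_qf F₁) measurable_const).inter
      (measurableSet_le ((measurable_qf F₂).comp (measurable_const.sub measurable_id))
        measurable_const)
  rw [Measure.restrict_apply hms]
  have hsub : {u | qf F₁ u ≤ a ∧ qf F₂ (1 - u) ≤ b} ∩ Ioo 0 1 ⊆
      Icc (1 - cdf F₂ b) (cdf F₁ a) := by
    rintro u ⟨⟨h1, h2⟩, hu⟩
    have e1 := (qf_le_iff hu).1 h1
    have e2 := (qf_le_iff (one_sub_mem hu)).1 h2
    exact ⟨by linarith, e1⟩
  refine le_trans (measure_mono hsub) ?_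
  rw [Real.volume_Icc]
  have key : ENNReal.ofReal (cdf F₁ a) + ENNReal.ofReal (cdf F₂ b) ≤
      1 + μ {ω | X₁ ω ≤ a ∧ X₂ ω ≤ b} := by
    have h1 : μ (X₁ ⁻¹' Iic a ∪ X₂ ⁻¹' Iic b) + μ (X₁ ⁻¹' Iic a ∩ X₂ ⁻¹' Iic b)
        = μ (X₁ ⁻¹' Iic a) + μ (X₂ ⁻¹' Iic b) :=
      measure_union_add_inter _ (hm₂ measurableSet_Iic)
    have h2 : μ (X₁ ⁻¹' Iic a ∪ X₂ ⁻¹' Iic b) ≤ 1 := prob_le_one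
    have h3 : X₁ ⁻¹' Iic a ∩ X₂ ⁻¹' Iic b = {ω | X₁ ω ≤ a ∧ X₂ ω ≤ b} := by
      ext ω; simp [mem_preimage]
    rw [← marg₁ μ X₁ F₁ hm₁ hd₁, ← marg₂ μ X₂ F₂ hm₂ hd₂, ← h1, h3]
    exact add_le_add h2 le_rfl
  have heq : ENNReal.ofReal (cdf F₁ a - (1 - cdf F₂ b))
      = (ENNReal.ofReal (cdf F₁ a) + ENNReal.ofReal (cdf F₂ b)) - 1 := by
    have : cdf F₁ a - (1 - cdf F₂ b) = (cdf F₁ a + cdf F₂ b) - 1 := by ring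
    rw [this, ENNReal.ofReal_sub _ zero_le_one, ENNReal.ofReal_add (cdf_nonneg F₁ a)
      (cdf_nonneg F₂ b), ENNReal.ofReal_one]
  rw [heq]
  exact tsub_le_iff_left.2 key

include hm₁ hm₂ hd₁ hd₂ in
lemma compC (a b : ℝ) :
    μ {ω | a < X₁ ω ∧ X₂ ω ≤ b} ≤
      (volume.restrict (Ioo (0:ℝ) 1)) {u | a < qf F₁ u ∧ qf F₂ (1 - u) ≤ b} := by
  have hms : MeasurableSet {u | a < qf F₁ u ∧ qf F₂ (1 - u) ≤ b} :=
    (measurableSet_lt measurable_const (measurable_qf F₁)).inter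
      (measurableSet_le ((measurable_qf F₂).comp (measurable_const.sub measurable_id))
        measurable_const)
  rw [Measure.restrict_apply hms]
  have hsup : Ioo (max (cdf F₁ a) (1 - cdf F₂ b)) 1 ⊆
      {u | a < qf F₁ u ∧ qf F₂ (1 - u) ≤ b} ∩ Ioo 0 1 := by
    rintro u ⟨h1, h2⟩
    have hu : u ∈ Ioo (0:ℝ) 1 := by
      constructor
      · exact lt_of_le_of_lt (le_trans (cdf_nonneg F₁ a) (le_max_left _ _)) h1
      · exact h2
    refine ⟨⟨(qf_lt_iff hu).2 (lt_of_le_of_lt (le_max_left _ _) h1), ?_⟩, hu⟩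
    refine (qf_le_iff (one_sub_mem hu)).2 ?_
    have := lt_of_le_of_lt (le_max_right _ _) h1
    linarith
  refine le_trans ?_ (measure_mono hsup)
  rw [Real.volume_Ioo]
  rcases le_total (cdf F₁ a) (1 - cdf F₂ b) with hc | hc
  · rw [max_eq_right hc]
    have : (1:ℝ) - (1 - cdf F₂ b) = cdf F₂ b := by ring
    rw [this, ← marg₂ μ X₂ F₂ hm₂ hd₂]
    refine measure_mono fun ω hω => hω.2
  · rw [max_eq_left hc]
    rw [ofReal_one_sub _ (cdf_nonneg F₁ a), ← marg₁' μ X₁ F₁ hm₁ hd₁]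
    exact measure_mono fun ω hω => hω.1

include hm₁ hm₂ hd₁ hd₂ in
lemma compD (a b : ℝ) :
    μ {ω | X₁ ω ≤ a ∧ b < X₂ ω} ≤
      (volume.restrict (Ioo (0:ℝ) 1)) {u | qf F₁ u ≤ a ∧ b < qf F₂ (1 - u)} := by
  have hms : MeasurableSet {u | qf F₁ u ≤ a ∧ b < qf F₂ (1 - u)} :=
    (measurableSet_le (measurable_qf F₁) measurable_const).inter
      (measurableSet_lt measurable_const
        ((measurable_qf F₂).comp (measurable_const.sub measurable_id)))
  rw [Measure.restrict_apply hms]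
  have hsup : Ioo (0:ℝ) (min (cdf F₁ a) (1 - cdf F₂ b)) ⊆
      {u | qf F₁ u ≤ a ∧ b < qf F₂ (1 - u)} ∩ Ioo 0 1 := by
    rintro u ⟨h1, h2⟩
    have hu : u ∈ Ioo (0:ℝ) 1 := by
      constructor
      · exact h1
      · exact lt_of_lt_of_le h2 (le_trans (min_le_right _ _) (by linarith [cdf_nonneg F₂ b]))
    refine ⟨⟨(qf_le_iff hu).2 (le_of_lt (lt_of_lt_of_le h2 (min_le_left _ _))), ?_⟩, hu⟩
    refine (qf_lt_iff (one_sub_mem hu)).2 ?_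
    have := lt_of_lt_of_le h2 (min_le_right _ _)
    linarith
  refine le_trans ?_ (measure_mono hsup)
  rw [Real.volume_Ioo, sub_zero]
  rcases le_total (cdf F₁ a) (1 - cdf F₂ b) with hc | hc
  · rw [min_eq_left hc, ← marg₁ μ X₁ F₁ hm₁ hd₁]
    exact measure_mono fun ω hω => hω.1
  · rw [min_eq_right hc, ofReal_one_sub _ (cdf_nonneg F₂ b), ← marg₂' μ X₂ F₂ hm₂ hd₂]
    exact measure_mono fun ω hω => hω.2

end Comp


/-- The antimonotonic coupling minimizes `E(X₁X₂)` among couplings with fixed marginals. -/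
theorem stmt_1 {Ω : Type*} [MeasurableSpace Ω] (μ : Measure Ω) [IsProbabilityMeasure μ]
    (X₁ X₂ : Ω → ℝ) (F₁ F₂ : Measure ℝ)
    [IsProbabilityMeasure F₁] [IsProbabilityMeasure F₂]
    (hm₁ : Measurable X₁) (hm₂ : Measurable X₂)
    (hd₁ : μ.map X₁ = F₁) (hd₂ : μ.map X₂ = F₂)
    (hL₁ : MemLp X₁ 2 μ) (hL₂ : MemLp X₂ 2 μ) :
    ∫ u in Icc (0:ℝ) 1, quantile F₁ u * quantile F₂ (1 - u) ≤ ∫ ω, X₁ ω * X₂ ω ∂μ := by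
  have hmX' : Measurable (qf F₁) := measurable_qf F₁
  have hmY' : Measurable (fun u : ℝ => qf F₂ (1 - u)) :=
    (measurable_qf F₂).comp (measurable_const.sub measurable_id)
  -- L² membership of the coupling
  have hid₁ : MemLp (id : ℝ → ℝ) 2 F₁ := by
    rw [← hd₁]
    exact (memLp_map_measure_iff aestronglyMeasurable_id hm₁.aemeasurable).2 hL₁
  have hid₂ : MemLp (id : ℝ → ℝ) 2 F₂ := by
    rw [← hd₂]
    exact (memLp_map_measure_iff aestronglyMeasurable_id hm₂.aemeasurable).2 hL₂
  have hLX' : MemLp (qf F₁) 2 (volume.restrict (Ioo (0:ℝ) 1)) := by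
    have := (memLp_map_measure_iff (f := qf F₁) (g := (id : ℝ → ℝ))
      aestronglyMeasurable_id (measurable_qf F₁).aemeasurable).1 (by rw [map_qf]; exact hid₁)
    exact this
  have hLq₂ : MemLp (qf F₂) 2 (volume.restrict (Ioo (0:ℝ) 1)) := by
    have := (memLp_map_measure_iff (f := qf F₂) (g := (id : ℝ → ℝ))
      aestronglyMeasurable_id (measurable_qf F₂).aemeasurable).1 (by rw [map_qf]; exact hid₂)
    exact this
  have hLY' : MemLp (fun u : ℝ => qf F₂ (1 - u)) 2 (volume.restrict (Ioo (0:ℝ) 1)) := by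
    have hmp : MeasurePreserving (fun u : ℝ => 1 - u) (volume.restrict (Ioo (0:ℝ) 1))
        (volume.restrict (Ioo (0:ℝ) 1)) := measurePreserving_one_sub
    have h1 : MemLp (qf F₂) 2 ((volume.restrict (Ioo (0:ℝ) 1)).map (fun u : ℝ => 1 - u)) := by
      rw [hmp.map_eq]; exact hLq₂
    exact (memLp_map_measure_iff (measurable_qf F₂).aestronglyMeasurable
      hmp.measurable.aemeasurable).1 h1
  -- rewrite the left-hand side
  have hLHS : ∫ u in Icc (0:ℝ) 1, quantile F₁ u * quantile F₂ (1 - u)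
      = ∫ u in Ioo (0:ℝ) 1, qf F₁ u * qf F₂ (1 - u) := by
    have hrs : volume.restrict (Icc (0:ℝ) 1) = volume.restrict (Ioo (0:ℝ) 1) :=
      (Measure.restrict_congr_set Ioo_ae_eq_Icc).symm
    rw [hrs]
    refine (setIntegral_congr_fun measurableSet_Ioo fun u hu => ?_).symm
    simp only [qf, if_pos hu, if_pos (one_sub_mem hu)]
  -- decompositions
  obtain ⟨hfA', hfB', hfC', hfD', hEq'⟩ :=
    key (volume.restrict (Ioo (0:ℝ) 1)) hmX' hmY' hLX' hLY'
  obtain ⟨hfA, hfB, hfC, hfD, hEq⟩ := key μ hm₁ hm₂ hL₁ hL₂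
  -- comparisons
  have hA : qA (volume.restrict (Ioo (0:ℝ) 1)) (qf F₁) (fun u => qf F₂ (1 - u)) ≤ qA μ X₁ X₂ :=
    lintegral_mono fun s => lintegral_mono fun t => compA μ X₁ X₂ F₁ F₂ hm₁ hm₂ hd₁ hd₂ s t
  have hB : qB (volume.restrict (Ioo (0:ℝ) 1)) (qf F₁) (fun u => qf F₂ (1 - u)) ≤ qB μ X₁ X₂ :=
    lintegral_mono fun s => lintegral_mono fun t => compB μ X₁ X₂ F₁ F₂ hm₁ hm₂ hd₁ hd₂ (-s) (-t)
  have hC : qC μ X₁ X₂ ≤ qC (volume.restrict (Ioo (0:ℝ) 1)) (qf F₁) (fun u => qf F₂ (1 - u)) :=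
    lintegral_mono fun s => lintegral_mono fun t => compC μ X₁ X₂ F₁ F₂ hm₁ hm₂ hd₁ hd₂ s (-t)
  have hD : qD μ X₁ X₂ ≤ qD (volume.restrict (Ioo (0:ℝ) 1)) (qf F₁) (fun u => qf F₂ (1 - u)) :=
    lintegral_mono fun s => lintegral_mono fun t => compD μ X₁ X₂ F₁ F₂ hm₁ hm₂ hd₁ hd₂ (-s) t
  have tA := ENNReal.toReal_mono hfA hA
  have tB := ENNReal.toReal_mono hfB hB
  have tC := ENNReal.toReal_mono hfC' hC
  have tD := ENNReal.toReal_mono hfD' hD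
  rw [hLHS, hEq', hEq]
  linarith
end

section
/- Let X₁,…,X_d be real random variables with X_i ~ F_i, and let G_i be the distribution function of |X_i|. Then E(X₁X₂⋯X_d) ≥ −E(∏_{i=1}^d G_i⁻¹(U)) where U is uniform on [0,1]. -/
open MeasureTheory Set Filter Topology ENNReal

section Quantile

variable {ν : Measure ℝ} [IsProbabilityMeasure ν] {u t : ℝ}

lemma qSet_subset (hν : ν (Iio 0) = 0) (hu : 0 < u) :
    {x : ℝ | u ≤ (ν (Iic x)).toReal} ⊆ Ici 0 := by
  intro x hx
  by_contra hx0
  simp only [mem_Ici, not_le] at hx0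
  have h1 : ν (Iic x) ≤ ν (Iio 0) := measure_mono (fun y hy => mem_Iio.mpr (lt_of_le_of_lt (mem_Iic.mp hy) hx0))
  rw [hν, nonpos_iff_eq_zero] at h1
  simp only [mem_setOf_eq, h1, ENNReal.toReal_zero] at hx
  exact absurd hx (not_le.mpr hu)

lemma qSet_nonempty (hu : u < 1) : ∃ x : ℝ, u ≤ (ν (Iic x)).toReal := by
  have h := tendsto_measure_Iic_atTop (μ := ν)
  rw [measure_univ] at h
  have h2 : Tendsto (fun x => (ν (Iic x)).toReal) atTop (𝓝 (1 : ℝ≥0∞).toReal) :=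
    (ENNReal.tendsto_toReal one_ne_top).comp h
  simp only [ENNReal.toReal_one] at h2
  exact (h2.eventually (eventually_ge_nhds hu)).exists

lemma quantile_le (hν : ν (Iio 0) = 0) (hu : 0 < u)
    (h : u ≤ (ν (Iic t)).toReal) : quantile ν u ≤ t :=
  csInf_le ⟨0, fun x hx => qSet_subset hν hu hx⟩ h

lemma quantile_nonneg (hν : ν (Iio 0) = 0) (hu : 0 < u) (hu1 : u < 1) :
    0 ≤ quantile ν u :=
  le_csInf (qSet_nonempty hu1) (fun x hx => qSet_subset hν hu hx)

lemma le_cdf_of_quantile_le (hν : ν (Iio 0) = 0) (hu : 0 < u) (hu1 : u < 1)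
    (hq : quantile ν u ≤ t) : u ≤ (ν (Iic t)).toReal := by
  have hne : {x : ℝ | u ≤ (ν (Iic x)).toReal}.Nonempty := qSet_nonempty hu1
  have hbdd : BddBelow {x : ℝ | u ≤ (ν (Iic x)).toReal} :=
    ⟨0, fun x hx => qSet_subset hν hu hx⟩
  -- step 1: for all ε > 0, u ≤ cdf (t + ε)
  have step1 : ∀ ε : ℝ, 0 < ε → u ≤ (ν (Iic (t + ε))).toReal := by
    intro ε hε
    obtain ⟨x, hx, hxlt⟩ := Real.lt_sInf_add_pos hne hε
    have hq' : sInf {x : ℝ | u ≤ (ν (Iic x)).toReal} ≤ t := hq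
    have : x ≤ t + ε := le_of_lt (lt_of_lt_of_le hxlt (by linarith))
    calc u ≤ (ν (Iic x)).toReal := hx
      _ ≤ (ν (Iic (t + ε))).toReal :=
        ENNReal.toReal_mono (measure_ne_top _ _) (measure_mono (Iic_subset_Iic.mpr this))
  -- step 2: right continuity
  have hmeas : Tendsto (fun n : ℕ => ν (Iic (t + 1 / (n + 1)))) atTop (𝓝 (ν (Iic t))) := by
    have h1 : (⋂ n : ℕ, Iic (t + 1 / (n + 1))) = Iic t := by
      ext y
      simp only [mem_iInter, mem_Iic]
      constructor
      · intro h
        by_contra hy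
        push_neg at hy
        obtain ⟨n, hn⟩ := exists_nat_one_div_lt (sub_pos.mpr hy)
        exact absurd (h n) (by push_neg; linarith)
      · intro h n
        have : (0:ℝ) < 1 / (n + 1) := by positivity
        linarith
    have h2 := tendsto_measure_iInter_atTop (μ := ν) (s := fun n : ℕ => Iic (t + 1 / (n + 1)))
      (fun n => measurableSet_Iic.nullMeasurableSet)
      (fun m n hmn => Iic_subset_Iic.mpr (by
        have : (1:ℝ) / (n + 1) ≤ 1 / (m + 1) := by
          apply one_div_le_one_div_of_le (by positivity) (by exact_mod_cast by linarith)
        linarith))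
      ⟨0, measure_ne_top _ _⟩
    rwa [h1] at h2
  have htoReal : Tendsto (fun n : ℕ => (ν (Iic (t + 1 / (n + 1)))).toReal) atTop
      (𝓝 (ν (Iic t)).toReal) :=
    (ENNReal.tendsto_toReal (measure_ne_top _ _)).comp hmeas
  exact ge_of_tendsto' htoReal (fun n => step1 _ (by positivity))

lemma quantile_monotoneOn (hν : ν (Iio 0) = 0) :
    MonotoneOn (quantile ν) (Ioo (0:ℝ) 1) := by
  intro u hu v hv huv
  exact csInf_le_csInf ⟨0, fun x hx => qSet_subset hν hu.1 hx⟩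
    (qSet_nonempty hv.2)
    (fun x hx => le_trans huv hx)

end Quantile

lemma exists_measurable_quantile (ν : Measure ℝ) [IsProbabilityMeasure ν]
    (hν : ν (Iio 0) = 0) :
    ∃ g : ℝ → ℝ, Measurable g ∧ EqOn g (quantile ν) (Ioo (0:ℝ) 1) := by
  set h : ℝ → ℝ := fun u => (1 + Real.exp (-u))⁻¹ with hh
  have hmem : ∀ u, h u ∈ Ioo (0:ℝ) 1 := by
    intro u
    have he : 0 < Real.exp (-u) := Real.exp_pos _
    constructor
    · positivity
    · rw [inv_lt_one_iff₀]
      right; linarith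
  have hmono : Monotone h := by
    intro u v huv
    have he : 0 < 1 + Real.exp (-v) := by positivity
    apply inv_anti₀ he
    have := Real.exp_le_exp.mpr (neg_le_neg huv)
    linarith
  have hqh : Monotone (quantile ν ∘ h) := fun u v huv =>
    quantile_monotoneOn hν (hmem u) (hmem v) (hmono huv)
  refine ⟨(quantile ν ∘ h) ∘ (fun x => Real.log (x / (1 - x))), ?_, ?_⟩
  · exact hqh.measurable.comp (Real.measurable_log.comp
      (measurable_id.div (measurable_const.sub measurable_id)))
  · intro x hx
    have hx0 : 0 < x := hx.1
    have hx1 : 0 < 1 - x := by linarith [hx.2]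
    have hr : 0 < x / (1 - x) := div_pos hx0 hx1
    have : h (Real.log (x / (1 - x))) = x := by
      simp only [hh, Real.exp_neg, Real.exp_log hr]
      rw [inv_div]
      have hx' : x ≠ 0 := ne_of_gt hx0
      have h2 : 1 + (1 - x) / x = 1 / x := by field_simp; ring
      rw [h2, one_div, inv_inv]
    simp only [Function.comp_apply, this]

lemma key_ineq {Ω : Type*} [MeasurableSpace Ω] (μ : Measure Ω) [IsProbabilityMeasure μ]
    {d : ℕ} (Y : Fin d → Ω → ℝ) (hYm : ∀ i, Measurable (Y i)) (hY : ∀ i ω, 0 ≤ Y i ω)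
    (t : Fin d → ℝ) :
    μ {ω | ∀ i, t i ∈ Ioo 0 (Y i ω)} ≤
      volume ({u : ℝ | ∀ i, t i ∈ Ioo 0 (quantile (μ.map (Y i)) u)} ∩ Ioo (0:ℝ) 1) := by
  set m := μ {ω | ∀ i, t i ∈ Ioo 0 (Y i ω)} with hmdef
  rcases eq_or_ne m 0 with h0 | h0
  · rw [h0]; exact zero_le
  have hm1 : m ≤ 1 := prob_le_one
  have hmtop : m ≠ ⊤ := (lt_of_le_of_lt hm1 one_lt_top).ne
  have hmpos : 0 < m.toReal := ENNReal.toReal_pos h0 hmtop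
  have hm1' : m.toReal ≤ 1 := by
    simpa using ENNReal.toReal_mono one_ne_top hm1
  obtain ⟨ω₀, hω₀⟩ : {ω | ∀ i, t i ∈ Ioo 0 (Y i ω)}.Nonempty :=
    nonempty_of_measure_ne_zero h0
  have hsub : Ioo (1 - m.toReal) 1 ⊆
      {u : ℝ | ∀ i, t i ∈ Ioo 0 (quantile (μ.map (Y i)) u)} ∩ Ioo (0:ℝ) 1 := by
    intro u hu
    have hu0 : 0 < u := lt_of_le_of_lt (by linarith) hu.1
    have hu1 : u < 1 := hu.2
    refine ⟨fun i => ⟨(hω₀ i).1, ?_⟩, hu0, hu1⟩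
    haveI : IsProbabilityMeasure (μ.map (Y i)) :=
      Measure.isProbabilityMeasure_map (hYm i).aemeasurable
    have hν0 : (μ.map (Y i)) (Iio 0) = 0 := by
      rw [Measure.map_apply (hYm i) measurableSet_Iio]
      have he : Y i ⁻¹' (Iio 0) = ∅ :=
        eq_empty_of_forall_notMem (fun ω hω => absurd (mem_Iio.mp hω) (not_lt.mpr (hY i ω)))
      simp [he]
    by_contra hq
    push_neg at hq
    have hle := le_cdf_of_quantile_le (ν := μ.map (Y i)) hν0 hu0 hu1 hq
    have h1 : m ≤ μ.map (Y i) (Ioi (t i)) := by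
      rw [Measure.map_apply (hYm i) measurableSet_Ioi]
      exact measure_mono (fun ω h => (h i).2)
    have h2 : (μ.map (Y i)) (Iic (t i)) = 1 - (μ.map (Y i)) (Ioi (t i)) := by
      rw [← compl_Ioi, measure_compl measurableSet_Ioi (measure_ne_top _ _), measure_univ]
    have h3 : ((μ.map (Y i)) (Iic (t i))).toReal ≤ 1 - m.toReal := by
      rw [h2, ENNReal.toReal_sub_of_le prob_le_one one_ne_top, ENNReal.toReal_one]
      have := ENNReal.toReal_mono (measure_ne_top _ _) h1
      linarith
    linarith [hle, hu.1]
  calc m = volume (Ioo (1 - m.toReal) 1) := by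
        rw [Real.volume_Ioo]
        have : (1:ℝ) - (1 - m.toReal) = m.toReal := by ring
        rw [this, ENNReal.ofReal_toReal hmtop]
    _ ≤ _ := measure_mono hsub

lemma swap_eq {α : Type*} [MeasurableSpace α] (κ : Measure α) [SFinite κ]
    {d : ℕ} (f : Fin d → α → ℝ) (hf : ∀ i, Measurable (f i)) :
    ∫⁻ x, (Measure.pi fun _ : Fin d => (volume : Measure ℝ))
        (univ.pi fun i => Ioo 0 (f i x)) ∂κ
      = ∫⁻ t : Fin d → ℝ, κ {x | ∀ i, t i ∈ Ioo 0 (f i x)}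
          ∂(Measure.pi fun _ : Fin d => (volume : Measure ℝ)) := by
  set P : Measure (Fin d → ℝ) := Measure.pi fun _ : Fin d => (volume : Measure ℝ) with hP
  set S : Set (α × (Fin d → ℝ)) := {q | ∀ i, q.2 i ∈ Ioo 0 (f i q.1)} with hSdef
  have hS : MeasurableSet S := by
    have : S = ⋂ i, ({q : α × (Fin d → ℝ) | 0 < q.2 i} ∩ {q | q.2 i < f i q.1}) := by
      ext q; simp [hSdef, mem_Ioo, forall_and]
    rw [this]
    exact MeasurableSet.iInter fun i =>
      (measurableSet_lt measurable_const (measurable_snd.eval)).inter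
        (measurableSet_lt (measurable_snd.eval)
          ((hf i).comp measurable_fst))
  have key := lintegral_lintegral_swap (μ := κ) (ν := P)
    (f := fun x t => S.indicator 1 (x, t))
    ((measurable_one.indicator hS).aemeasurable)
  calc ∫⁻ x, P (univ.pi fun i => Ioo 0 (f i x)) ∂κ
      = ∫⁻ x, ∫⁻ t, S.indicator 1 (x, t) ∂P ∂κ := by
        apply lintegral_congr
        intro x
        have h1 : (fun t : Fin d → ℝ => S.indicator 1 (x, t))
            = (univ.pi fun i => Ioo 0 (f i x)).indicator (1 : (Fin d → ℝ) → ℝ≥0∞) := by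
          ext t
          simp only [indicator_apply, hSdef, mem_setOf_eq, Set.mem_pi, mem_univ, forall_true_left,
            Pi.one_apply]
          congr 1
          simp [eq_iff_iff]
        rw [h1, lintegral_indicator_one (MeasurableSet.univ_pi fun i => measurableSet_Ioo)]
    _ = ∫⁻ t, ∫⁻ x, S.indicator 1 (x, t) ∂κ ∂P := key
    _ = ∫⁻ t : Fin d → ℝ, κ {x | ∀ i, t i ∈ Ioo 0 (f i x)} ∂P := by
        apply lintegral_congr
        intro t
        have h1 : (fun x : α => S.indicator 1 (x, t))
            = ({x : α | ∀ i, t i ∈ Ioo 0 (f i x)}).indicator (1 : α → ℝ≥0∞) := by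
          ext x
          simp only [indicator_apply, hSdef, mem_setOf_eq, Pi.one_apply]
        rw [h1, lintegral_indicator_one]
        have : {x : α | ∀ i, t i ∈ Ioo 0 (f i x)}
            = ⋂ i, ({x : α | 0 < t i} ∩ {x | t i < f i x}) := by
          ext x; simp [mem_Ioo, forall_and]
        rw [this]
        exact MeasurableSet.iInter fun i =>
          (MeasurableSet.const _).inter (measurableSet_lt measurable_const (hf i))

lemma prod_ofReal_eq_pi {d : ℕ} (a : Fin d → ℝ) :
    ∏ i, ENNReal.ofReal (a i)
      = (Measure.pi fun _ : Fin d => (volume : Measure ℝ)) (univ.pi fun i => Ioo 0 (a i)) := by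
  rw [Measure.pi_pi]
  congr 1
  ext i
  rw [Real.volume_Ioo, sub_zero]

/-- `E(X₁⋯X_d) ≥ −E(∏ G_i⁻¹(U))` where `G_i` is the distribution function of `|X_i|`. -/
theorem stmt_3 {Ω : Type*} [MeasurableSpace Ω] (μ : Measure Ω) [IsProbabilityMeasure μ]
    (d : ℕ) (X : Fin d → Ω → ℝ) (hm : ∀ i, Measurable (X i))
    (hInt : Integrable (fun ω => ∏ i, X i ω) μ)
    (hIntQ : IntegrableOn
      (fun u => ∏ i, quantile (μ.map (fun ω => |X i ω|)) u) (Icc (0:ℝ) 1) volume) :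
    -∫ u in Icc (0:ℝ) 1, ∏ i, quantile (μ.map (fun ω => |X i ω|)) u
      ≤ ∫ ω, ∏ i, X i ω ∂μ := by
  set Y : Fin d → Ω → ℝ := fun i ω => |X i ω| with hY
  have hYm : ∀ i, Measurable (Y i) := fun i => (hm i).abs
  have hYnn : ∀ i ω, 0 ≤ Y i ω := fun i ω => abs_nonneg _
  set ν : Fin d → Measure ℝ := fun i => μ.map (Y i) with hν
  have hprob : ∀ i, IsProbabilityMeasure (ν i) :=
    fun i => Measure.isProbabilityMeasure_map (hYm i).aemeasurable
  have hν0 : ∀ i, ν i (Iio 0) = 0 := by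
    intro i
    rw [hν, Measure.map_apply (hYm i) measurableSet_Iio]
    have he : Y i ⁻¹' (Iio 0) = ∅ :=
      eq_empty_of_forall_notMem (fun ω hω => absurd (mem_Iio.mp hω) (not_lt.mpr (hYnn i ω)))
    simp [he]
  have hex : ∀ i, ∃ g : ℝ → ℝ, Measurable g ∧ EqOn g (quantile (ν i)) (Ioo (0:ℝ) 1) := by
    intro i
    haveI := hprob i
    exact exists_measurable_quantile _ (hν0 i)
  choose g hgm hgeq using hex
  set Q : ℝ → ℝ := fun u => ∏ i, quantile (ν i) u with hQ
  -- nonnegativity of Q on (0,1)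
  have hQnn : ∀ u ∈ Ioo (0:ℝ) 1, 0 ≤ Q u := by
    intro u hu
    refine Finset.prod_nonneg fun i _ => ?_
    haveI := hprob i
    exact quantile_nonneg (hν0 i) hu.1 hu.2
  have hrestr : volume.restrict (Icc (0:ℝ) 1) = volume.restrict (Ioo (0:ℝ) 1) :=
    (Measure.restrict_congr_set Ioo_ae_eq_Icc).symm
  have haemem : ∀ᵐ u ∂volume.restrict (Icc (0:ℝ) 1), u ∈ Ioo (0:ℝ) 1 := by
    rw [hrestr]; exact ae_restrict_mem measurableSet_Ioo
  have hQnn' : 0 ≤ᵐ[volume.restrict (Icc (0:ℝ) 1)] Q :=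
    haemem.mono fun u hu => hQnn u hu
  -- integrability of ∏ |X i|
  have habs_eq : (fun ω => |∏ i, X i ω|) = fun ω => ∏ i, |X i ω| := by
    funext ω; exact Finset.abs_prod _ _
  have hInt' : Integrable (fun ω => ∏ i, |X i ω|) μ := habs_eq ▸ hInt.abs
  -- ENNReal versions
  set P : Measure (Fin d → ℝ) := Measure.pi fun _ : Fin d => (volume : Measure ℝ) with hP
  have hA : ENNReal.ofReal (∫ ω, ∏ i, |X i ω| ∂μ)
      = ∫⁻ ω, ∏ i, ENNReal.ofReal (|X i ω|) ∂μ := by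
    rw [ofReal_integral_eq_lintegral_ofReal hInt'
      (Filter.Eventually.of_forall fun ω => Finset.prod_nonneg fun i _ => abs_nonneg _)]
    exact lintegral_congr fun ω =>
      ENNReal.ofReal_prod_of_nonneg fun i _ => abs_nonneg _
  have hB : ENNReal.ofReal (∫ u in Icc (0:ℝ) 1, Q u)
      = ∫⁻ u in Ioo (0:ℝ) 1, ∏ i, ENNReal.ofReal (g i u) ∂volume := by
    rw [ofReal_integral_eq_lintegral_ofReal hIntQ hQnn', hrestr]
    refine setLIntegral_congr_fun measurableSet_Ioo
      (fun u hu => ?_)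
    rw [ENNReal.ofReal_prod_of_nonneg fun i _ => (by
      haveI := hprob i
      exact quantile_nonneg (hν0 i) hu.1 hu.2)]
    exact Finset.prod_congr rfl fun i _ => by rw [hgeq i hu]
  -- layer cake on both sides
  have hAeq : ∫⁻ ω, ∏ i, ENNReal.ofReal (|X i ω|) ∂μ
      = ∫⁻ t : Fin d → ℝ, μ {ω | ∀ i, t i ∈ Ioo 0 (Y i ω)} ∂P := by
    rw [← swap_eq μ Y hYm]
    exact lintegral_congr fun ω => prod_ofReal_eq_pi _
  have hBeq : ∫⁻ u in Ioo (0:ℝ) 1, ∏ i, ENNReal.ofReal (g i u) ∂volume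
      = ∫⁻ t : Fin d → ℝ, (volume.restrict (Ioo (0:ℝ) 1)) {u | ∀ i, t i ∈ Ioo 0 (g i u)} ∂P := by
    rw [← swap_eq (volume.restrict (Ioo (0:ℝ) 1)) g hgm]
    exact lintegral_congr fun u => prod_ofReal_eq_pi _
  -- pointwise comparison
  have hcomp : ∫⁻ t : Fin d → ℝ, μ {ω | ∀ i, t i ∈ Ioo 0 (Y i ω)} ∂P
      ≤ ∫⁻ t : Fin d → ℝ, (volume.restrict (Ioo (0:ℝ) 1)) {u | ∀ i, t i ∈ Ioo 0 (g i u)} ∂P := by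
    refine lintegral_mono fun t => ?_
    have hms : MeasurableSet {u : ℝ | ∀ i, t i ∈ Ioo 0 (g i u)} := by
      have : {u : ℝ | ∀ i, t i ∈ Ioo 0 (g i u)}
          = ⋂ i, ({u : ℝ | 0 < t i} ∩ {u | t i < g i u}) := by
        ext u; simp [mem_Ioo, forall_and]
      rw [this]
      exact MeasurableSet.iInter fun i =>
        (MeasurableSet.const _).inter (measurableSet_lt measurable_const (hgm i))
    rw [Measure.restrict_apply hms]
    have hset : {u : ℝ | ∀ i, t i ∈ Ioo 0 (g i u)} ∩ Ioo (0:ℝ) 1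
        = {u : ℝ | ∀ i, t i ∈ Ioo 0 (quantile (ν i) u)} ∩ Ioo (0:ℝ) 1 := by
      ext u
      constructor
      · rintro ⟨h1, h2⟩
        exact ⟨fun i => by rw [← hgeq i h2]; exact h1 i, h2⟩
      · rintro ⟨h1, h2⟩
        exact ⟨fun i => by rw [hgeq i h2]; exact h1 i, h2⟩
    rw [hset]
    exact key_ineq μ Y hYm hYnn t
  -- combine in ℝ
  have hRnn : 0 ≤ ∫ u in Icc (0:ℝ) 1, Q u := integral_nonneg_of_ae hQnn'
  have hle : ∫ ω, ∏ i, |X i ω| ∂μ ≤ ∫ u in Icc (0:ℝ) 1, Q u := by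
    rw [← ENNReal.ofReal_le_ofReal_iff hRnn, hA, hB, hAeq, hBeq]
    exact hcomp
  have h1 : |∫ ω, ∏ i, X i ω ∂μ| ≤ ∫ ω, ∏ i, |X i ω| ∂μ := by
    simpa [Real.norm_eq_abs] using norm_integral_le_integral_norm (μ := μ) (fun ω => ∏ i, X i ω)
  have h3 := neg_abs_le (∫ ω, ∏ i, X i ω ∂μ)
  linarith
end
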